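/- arXiv:1505.07902 — 3 statements merged into one kernel-verified Lean document; each statement's English description precedes it below -/
import Mathlib

section
/- Let s ≥ 3 and N ≥ 1, and let φ : Σ_s → ℝ^N be continuous (with respect to the product topology on Σ_s). Then the general rotation set G_φ is a convex subset of ℝ^N. -/
open Filter Topology

/-- The symbol space `Σ_s`: bi-infinite admissible sequences over an alphabet with
`s` symbols (represented by `Fin s`), i.e. `ξ_i ≠ ξ_{i+1}` for all `i ∈ ℤ`. -/
def SymbSpace (s : ℕ) : Type := {ξ : ℤ → Fin s // ∀ i : ℤ, ξ i ≠ ξ (i + 1)}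

/-- The (left) shift map `σ : Σ_s → Σ_s`, `(σξ)_i = ξ_{i+1}`. -/
def shift {s : ℕ} (ξ : SymbSpace s) : SymbSpace s :=
  ⟨fun i => ξ.1 (i + 1), fun i => ξ.2 (i + 1)⟩

/-- Birkhoff average `A_n(ξ) = (1/n) ∑_{i=0}^{n-1} φ(σ^i ξ)`. -/
noncomputable def birk {s N : ℕ} (φ : SymbSpace s → EuclideanSpace ℝ (Fin N))
    (n : ℕ) (ξ : SymbSpace s) : EuclideanSpace ℝ (Fin N) :=
  (n : ℝ)⁻¹ • ∑ i ∈ Finset.range n, φ (shift^[i] ξ)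

/-- The product topology on `Σ_s` (each factor `Fin s` carrying the discrete topology). -/
noncomputable instance (s : ℕ) : TopologicalSpace (SymbSpace s) := by
  unfold SymbSpace; infer_instance

/-- The general rotation set `G_φ`: all limits of Birkhoff averages `A_{n_k}(ξ)` along
strictly increasing sequences of positive integers `n_k`, over all `ξ ∈ Σ_s`. -/
def GenRot {s N : ℕ} (φ : SymbSpace s → EuclideanSpace ℝ (Fin N)) :
    Set (EuclideanSpace ℝ (Fin N)) :=
  {ρ | ∃ (ξ : SymbSpace s) (n : ℕ → ℕ), StrictMono n ∧ (∀ k, 0 < n k) ∧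
      Tendsto (fun k => birk φ (n k) ξ) atTop (nhds ρ)}

namespace RotAux
variable {s : ℕ}

lemma shift_iter_apply (ξ : SymbSpace s) (k : ℕ) (i : ℤ) :
    (shift^[k] ξ).1 i = ξ.1 (i + k) := by
  induction k generalizing ξ with
  | zero => simp
  | succ k ih =>
    rw [Function.iterate_succ_apply, ih]
    show ξ.1 (i + k + 1) = _
    push_cast
    ring_nf

lemma continuous_coord (d : ℤ) : Continuous fun ξ : SymbSpace s => ξ.1 d := by
  exact (continuous_apply d).comp continuous_subtype_val

instance : CompactSpace (SymbSpace s) := by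
  have h : IsClosed {ξ : ℤ → Fin s | ∀ i : ℤ, ξ i ≠ ξ (i + 1)} := by
    have : {ξ : ℤ → Fin s | ∀ i : ℤ, ξ i ≠ ξ (i + 1)} =
        ⋂ i : ℤ, {ξ : ℤ → Fin s | (ξ i, ξ (i+1)) ∈ ({p : Fin s × Fin s | p.1 ≠ p.2})} := by
      ext ξ; simp [Set.mem_iInter]
    rw [this]
    refine isClosed_iInter fun i => IsClosed.preimage ?_ (isClosed_discrete _)
    exact ((continuous_apply i).prodMk (continuous_apply (i+1)))
  exact isCompact_iff_compactSpace.mp h.isCompact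


lemma exists_third (hs : 3 ≤ s) (a b : Fin s) : ∃ c : Fin s, c ≠ a ∧ c ≠ b := by
  by_contra h
  push_neg at h
  have hsub : (Finset.univ : Finset (Fin s)) ⊆ {a, b} := by
    intro c _
    rcases Classical.em (c = a) with h1 | h1
    · simp [h1]
    · simp [h c h1]
  have h1 := Finset.card_le_card hsub
  have h2 : ({a, b} : Finset (Fin s)).card ≤ 2 := (Finset.card_insert_le _ _).trans (by simp)
  simp [Finset.card_univ] at h1
  omega

lemma exists_pair_ne (hs : 3 ≤ s) (c : Fin s) : ∃ a b : Fin s, a ≠ b ∧ a ≠ c ∧ b ≠ c := by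
  obtain ⟨a, ha, -⟩ := exists_third hs c c
  obtain ⟨b, hb1, hb2⟩ := exists_third hs a c
  exact ⟨a, b, fun h => hb1 h.symm, ha, hb2⟩

/-- Uniform modulus of continuity from compactness. -/
lemma modulus {N : ℕ} (φ : SymbSpace s → EuclideanSpace ℝ (Fin N)) (hφ : Continuous φ)
    {ε : ℝ} (hε : 0 < ε) :
    ∃ W : ℕ, ∀ x y : SymbSpace s, (∀ d : ℤ, |d| ≤ (W : ℤ) → x.1 d = y.1 d) →
      ‖φ x - φ y‖ ≤ ε := by
  by_contra h
  push_neg at h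
  set K : ℕ → Set (SymbSpace s × SymbSpace s) := fun W =>
    {p | (∀ d : ℤ, |d| ≤ (W : ℤ) → p.1.1 d = p.2.1 d) ∧ ε ≤ ‖φ p.1 - φ p.2‖} with hK
  have hclosed : ∀ W, IsClosed (K W) := by
    intro W
    apply IsClosed.inter
    · show IsClosed {p : SymbSpace s × SymbSpace s | ∀ d : ℤ, |d| ≤ (W : ℤ) → p.1.1 d = p.2.1 d}
      have : {p : SymbSpace s × SymbSpace s | ∀ d : ℤ, |d| ≤ (W : ℤ) → p.1.1 d = p.2.1 d} =
        ⋂ d : ℤ, ⋂ (_ : |d| ≤ (W : ℤ)), {p : SymbSpace s × SymbSpace s | p.1.1 d = p.2.1 d} := by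
        ext p; simp [Set.mem_iInter]
      rw [this]
      refine isClosed_iInter fun d => isClosed_iInter fun _ => ?_
      have hc : Continuous fun p : SymbSpace s × SymbSpace s => (p.1.1 d, p.2.1 d) :=
        ((continuous_coord d).comp continuous_fst).prodMk ((continuous_coord d).comp continuous_snd)
      exact IsClosed.preimage hc (isClosed_discrete {q : Fin s × Fin s | q.1 = q.2})
    · have hc : Continuous fun p : SymbSpace s × SymbSpace s => ‖φ p.1 - φ p.2‖ :=
        ((hφ.comp continuous_fst).sub (hφ.comp continuous_snd)).norm
      exact isClosed_le continuous_const hc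
  have hmono : ∀ W, K (W + 1) ⊆ K W := by
    intro W p hp
    exact ⟨fun d hd => hp.1 d (by omega), hp.2⟩
  have hne : ∀ W, (K W).Nonempty := by
    intro W
    obtain ⟨x, y, hxy, hlt⟩ := h W
    exact ⟨(x, y), hxy, hlt.le⟩
  have := IsCompact.nonempty_iInter_of_sequence_nonempty_isCompact_isClosed K hmono hne
    ((hclosed 0).isCompact) hclosed
  obtain ⟨⟨x, y⟩, hp⟩ := this
  simp only [Set.mem_iInter, hK, Set.mem_setOf_eq] at hp
  have hxy : x = y := by
    apply Subtype.ext
    funext d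
    exact (hp d.natAbs).1 d (le_of_eq (Int.abs_eq_natAbs d))
  have := (hp 0).2
  rw [hxy] at this
  simp at this
  linarith


section Loc
open Classical in
/-- Greatest `k` with `f k ≤ i` (for `f` strictly monotone with `f 0 = 0`). -/
noncomputable def loc (f : ℕ → ℕ) (i : ℕ) : ℕ := Nat.findGreatest (fun k => f k ≤ i) i

lemma loc_le {f : ℕ → ℕ} (hf0 : f 0 = 0) (i : ℕ) : f (loc f i) ≤ i := by
  classical
  exact Nat.findGreatest_spec (P := fun k => f k ≤ i) (Nat.zero_le i) (by omega)

lemma lt_loc_succ {f : ℕ → ℕ} (hf : StrictMono f) (hf0 : f 0 = 0) (i : ℕ) :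
    i < f (loc f i + 1) := by
  classical
  by_contra h
  push_neg at h
  have h1 : loc f i + 1 ≤ f (loc f i + 1) := hf.le_apply
  exact Nat.findGreatest_is_greatest (Nat.lt_succ_self _) (h1.trans h) h

lemma loc_eq {f : ℕ → ℕ} (hf : StrictMono f) (hf0 : f 0 = 0) {k i : ℕ}
    (h1 : f k ≤ i) (h2 : i < f (k + 1)) : loc f i = k := by
  have ha := loc_le hf0 i
  have hb := lt_loc_succ hf hf0 i
  rcases lt_trichotomy (loc f i) k with h | h | h
  · have : f (loc f i + 1) ≤ f k := hf.monotone (by omega)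
    omega
  · exact h
  · have : f (k + 1) ≤ f (loc f i) := hf.monotone (by omega)
    omega
end Loc

section Concat
variable {s : ℕ} (hs : 3 ≤ s) (len : ℕ → ℕ) (src : ℕ → SymbSpace s)

/-- Start position of block `k`: each block occupies `len k` letters plus one glue letter. -/
def SS (k : ℕ) : ℕ := ∑ u ∈ Finset.range k, (len u + 1)

lemma SS_zero : SS len 0 = 0 := by simp [SS]

lemma SS_succ (k : ℕ) : SS len (k + 1) = SS len k + (len k + 1) := Finset.sum_range_succ _ k

lemma SS_strictMono : StrictMono (SS len) := by
  apply strictMono_nat_of_lt_succ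
  intro k
  rw [SS_succ]
  omega

/-- glue symbol after block `k`. -/
noncomputable def glue (k : ℕ) : Fin s :=
  (exists_third hs ((src k).1 (len k - 1)) ((src (k + 1)).1 0)).choose

lemma glue_ne_last (k : ℕ) : glue hs len src k ≠ (src k).1 (len k - 1) :=
  (exists_third hs _ _).choose_spec.1

lemma glue_ne_first (k : ℕ) : glue hs len src k ≠ (src (k + 1)).1 0 :=
  (exists_third hs _ _).choose_spec.2

/-- nonnegative part of the concatenation. -/
noncomputable def zpos (i : ℕ) : Fin s :=
  let k := loc (SS len) i
  let r := i - SS len k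
  if r < len k then (src k).1 (r : ℤ) else glue hs len src k

variable (hlen : ∀ k, 1 ≤ len k)

include hlen in
lemma zpos_spec {k r : ℕ} (hr : r < len k) :
    zpos hs len src (SS len k + r) = (src k).1 (r : ℤ) := by
  have hloc : loc (SS len) (SS len k + r) = k :=
    loc_eq (SS_strictMono len) (SS_zero len) (Nat.le_add_right _ _)
      (by rw [SS_succ]; omega)
  unfold zpos
  simp only [hloc]
  rw [show SS len k + r - SS len k = r from by omega, if_pos hr]

include hlen in
lemma zpos_glue (k : ℕ) :
    zpos hs len src (SS len k + len k) = glue hs len src k := by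
  have hloc : loc (SS len) (SS len k + len k) = k :=
    loc_eq (SS_strictMono len) (SS_zero len) (Nat.le_add_right _ _)
      (by rw [SS_succ]; omega)
  unfold zpos
  simp only [hloc]
  rw [show SS len k + len k - SS len k = len k from by omega, if_neg (by omega)]

include hlen in
lemma zpos_adm (i : ℕ) : zpos hs len src i ≠ zpos hs len src (i + 1) := by
  set k := loc (SS len) i with hk
  have h1 : SS len k ≤ i := loc_le (SS_zero len) i
  have h2 : i < SS len (k + 1) := lt_loc_succ (SS_strictMono len) (SS_zero len) i
  rw [SS_succ] at h2
  set r := i - SS len k with hr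
  have hi : i = SS len k + r := by omega
  rcases lt_trichotomy (r + 1) (len k) with h | h | h
  · -- both inside block k
    rw [hi, zpos_spec hs len src hlen (by omega),
      show SS len k + r + 1 = SS len k + (r + 1) by ring,
      zpos_spec hs len src hlen h]
    have := (src k).2 r
    push_cast at this ⊢
    exact this
  · -- i is last letter, i+1 is glue
    rw [hi, zpos_spec hs len src hlen (by omega),
      show SS len k + r + 1 = SS len k + len k by omega,
      zpos_glue hs len src hlen]
    have hlk := hlen k
    have hidx : ((len k : ℤ) - 1) = (r : ℤ) := by omega
    intro hc
    exact glue_ne_last hs len src k (by rw [hidx]; exact hc.symm)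
  · -- i is the glue position
    have hrlen : r = len k := by omega
    rw [hi, hrlen, zpos_glue hs len src hlen,
      show SS len k + len k + 1 = SS len (k + 1) + 0 from by rw [SS_succ]; ring,
      zpos_spec hs len src hlen (hlen (k + 1))]
    exact glue_ne_first hs len src k

/-- two distinct symbols different from the first letter, for the negative side. -/
noncomputable def negA : Fin s := (exists_pair_ne hs ((src 0).1 0)).choose

noncomputable def negB : Fin s :=
  (exists_pair_ne hs ((src 0).1 0)).choose_spec.choose

lemma neg_spec : negA hs src ≠ negB hs src ∧ negA hs src ≠ (src 0).1 0 ∧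
    negB hs src ≠ (src 0).1 0 :=
  (exists_pair_ne hs ((src 0).1 0)).choose_spec.choose_spec

/-- the concatenation as a bi-infinite sequence. -/
noncomputable def zfun (i : ℤ) : Fin s :=
  if 0 ≤ i then zpos hs len src i.toNat
  else if Even i then negB hs src else negA hs src

lemma zfun_neg {i : ℤ} (hi : i < 0) :
    zfun hs len src i = if Even i then negB hs src else negA hs src := by
  rw [zfun, if_neg (by omega)]

lemma zfun_nonneg {i : ℤ} (hi : 0 ≤ i) : zfun hs len src i = zpos hs len src i.toNat := by
  rw [zfun, if_pos hi]

include hlen in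
lemma zfun_adm (i : ℤ) : zfun hs len src i ≠ zfun hs len src (i + 1) := by
  rcases le_or_gt 0 i with h | h
  · rw [zfun_nonneg hs len src h, zfun_nonneg hs len src (by omega),
      show (i + 1).toNat = i.toNat + 1 from by omega]
    exact zpos_adm hs len src hlen i.toNat
  · rcases eq_or_lt_of_le (show i ≤ -1 by omega) with h1 | h1
    · rw [zfun_neg hs len src (by omega), zfun_nonneg hs len src (by omega),
        if_neg (by rw [h1]; decide)]
      have h0 : zpos hs len src (i + 1).toNat = (src 0).1 ((0 : ℕ) : ℤ) := by
        rw [show (i + 1).toNat = 0 from by omega]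
        have := zpos_spec hs len src hlen (r := 0) (k := 0) (hlen 0)
        rw [SS_zero] at this
        simpa using this
      rw [h0]
      simpa using (neg_spec hs src).2.1
    · rw [zfun_neg hs len src (by omega), zfun_neg hs len src (by omega)]
      rcases Int.even_or_odd i with he | ho
      · rw [if_pos he, if_neg (by simpa [Int.even_add_one] using he)]
        exact fun hc => (neg_spec hs src).1 hc.symm
      · rw [if_neg (by simpa [Int.not_even_iff_odd] using ho),
          if_pos (by rw [Int.even_add_one]; simpa [Int.not_even_iff_odd] using ho)]
        exact fun hc => (neg_spec hs src).1 hc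

/-- the concatenation point of `Σ_s`. -/
noncomputable def zeta : SymbSpace s := ⟨zfun hs len src, zfun_adm hs len src hlen⟩

include hlen in
lemma zeta_spec {k : ℕ} {v : ℤ} (h0 : 0 ≤ v) (hv : v < (len k : ℤ)) :
    (zeta hs len src hlen).1 ((SS len k : ℤ) + v) = (src k).1 v := by
  show zfun hs len src _ = _
  rw [zfun, if_pos (by omega), show ((SS len k : ℤ) + v).toNat = SS len k + v.toNat from by omega,
    zpos_spec hs len src hlen (show v.toNat < len k by omega)]
  rw [show ((v.toNat : ℕ) : ℤ) = v from by omega]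
end Concat

section Est
variable {s N : ℕ} (hs : 3 ≤ s) (len : ℕ → ℕ) (src : ℕ → SymbSpace s)
  (hlen : ∀ k, 1 ≤ len k)
  (φ : SymbSpace s → EuclideanSpace ℝ (Fin N))
  (C : ℝ) (hC : ∀ x, ‖φ x‖ ≤ C)
  (ε : ℝ) (hε : 0 < ε) (W : ℕ)
  (hW : ∀ x y : SymbSpace s, (∀ d : ℤ, |d| ≤ (W : ℤ) → x.1 d = y.1 d) → ‖φ x - φ y‖ ≤ ε)

include hW hlen in
lemma term_est {k r : ℕ} (h1 : W ≤ r) (h2 : r + W < len k) :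
    ‖φ (shift^[SS len k + r] (zeta hs len src hlen)) - φ (shift^[r] (src k))‖ ≤ ε := by
  apply hW
  intro d hd
  obtain ⟨hd1, hd2⟩ := abs_le.mp hd
  rw [shift_iter_apply, shift_iter_apply]
  have he : (d + ((SS len k + r : ℕ) : ℤ)) = (SS len k : ℤ) + (d + r) := by push_cast; ring
  rw [he, zeta_spec hs len src hlen (by omega) (by push_cast; omega)]

include hC in
lemma sum_crude (x : SymbSpace s) (T : Finset ℕ) :
    ‖∑ i ∈ T, φ (shift^[i] x)‖ ≤ (T.card : ℝ) * C := by
  calc ‖∑ i ∈ T, φ (shift^[i] x)‖ ≤ ∑ i ∈ T, ‖φ (shift^[i] x)‖ := norm_sum_le _ _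
    _ ≤ ∑ _i ∈ T, C := Finset.sum_le_sum fun i _ => hC _
    _ = (T.card : ℝ) * C := by rw [Finset.sum_const, nsmul_eq_mul]

include hC hW hε hlen in
lemma block_est (k : ℕ) :
    ‖∑ r ∈ Finset.range (len k + 1), φ (shift^[SS len k + r] (zeta hs len src hlen))
      - ∑ r ∈ Finset.range (len k), φ (shift^[r] (src k))‖
      ≤ (len k : ℝ) * ε + (2 * W + 1) * (2 * C) := by
  have hC0 : 0 ≤ C := le_trans (norm_nonneg _) (hC (src k))
  rw [Finset.sum_range_succ]
  have key : ‖∑ r ∈ Finset.range (len k), φ (shift^[SS len k + r] (zeta hs len src hlen))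
      - ∑ r ∈ Finset.range (len k), φ (shift^[r] (src k))‖
      ≤ (len k : ℝ) * ε + (2 * W : ℝ) * (2 * C) := by
    rw [← Finset.sum_sub_distrib]
    calc _ ≤ ∑ r ∈ Finset.range (len k),
        ‖φ (shift^[SS len k + r] (zeta hs len src hlen)) - φ (shift^[r] (src k))‖ :=
          norm_sum_le _ _
      _ ≤ ∑ r ∈ Finset.range (len k),
          (ε + if W ≤ r ∧ r + W < len k then 0 else 2 * C) := by
          refine Finset.sum_le_sum fun r _ => ?_
          by_cases hr : W ≤ r ∧ r + W < len k
          · rw [if_pos hr, add_zero]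
            exact term_est hs len src hlen φ ε W hW hr.1 hr.2
          · rw [if_neg hr]
            have := norm_sub_le (φ (shift^[SS len k + r] (zeta hs len src hlen)))
              (φ (shift^[r] (src k)))
            have h1 := hC (shift^[SS len k + r] (zeta hs len src hlen))
            have h2 := hC (shift^[r] (src k))
            linarith
      _ = (len k : ℝ) * ε + ∑ r ∈ Finset.range (len k),
          (if W ≤ r ∧ r + W < len k then 0 else 2 * C) := by
          rw [Finset.sum_add_distrib, Finset.sum_const, Finset.card_range, nsmul_eq_mul]
      _ ≤ (len k : ℝ) * ε + (2 * W : ℝ) * (2 * C) := by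
          have e1 : ∑ r ∈ Finset.range (len k), (if W ≤ r ∧ r + W < len k then (0:ℝ) else 2 * C)
              = ∑ _r ∈ (Finset.range (len k)).filter
                  (fun r => ¬(W ≤ r ∧ r + W < len k)), 2 * C := by
            rw [Finset.sum_filter]
            exact Finset.sum_congr rfl fun r _ => (ite_not _ _ _).symm
          have hsub : (Finset.range (len k)).filter (fun r => ¬(W ≤ r ∧ r + W < len k))
              ⊆ Finset.range W ∪ Finset.Ico (len k - W) (len k) := by
            intro r hr
            simp only [Finset.mem_filter, Finset.mem_range, not_and, not_lt] at hr
            simp only [Finset.mem_union, Finset.mem_range, Finset.mem_Ico]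
            omega
          have hcard : ((Finset.range (len k)).filter
              (fun r => ¬(W ≤ r ∧ r + W < len k))).card ≤ 2 * W := by
            refine le_trans (Finset.card_le_card hsub) ?_
            refine le_trans (Finset.card_union_le _ _) ?_
            rw [Finset.card_range, Nat.card_Ico]
            omega
          have e2 : ∑ _r ∈ (Finset.range (len k)).filter
              (fun r => ¬(W ≤ r ∧ r + W < len k)), (2:ℝ) * C
              = (((Finset.range (len k)).filter
                  (fun r => ¬(W ≤ r ∧ r + W < len k))).card : ℝ) * (2 * C) := by
            rw [Finset.sum_const, nsmul_eq_mul]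
          have : (((Finset.range (len k)).filter
              (fun r => ¬(W ≤ r ∧ r + W < len k))).card : ℝ) ≤ (2 * W : ℝ) := by
            exact_mod_cast Nat.cast_le.mpr hcard
          rw [e1, e2]
          nlinarith [this, hC0]
  have hlast := hC (shift^[SS len k + len k] (zeta hs len src hlen))
  calc ‖∑ r ∈ Finset.range (len k), φ (shift^[SS len k + r] (zeta hs len src hlen))
        + φ (shift^[SS len k + len k] (zeta hs len src hlen))
        - ∑ r ∈ Finset.range (len k), φ (shift^[r] (src k))‖
      ≤ ‖∑ r ∈ Finset.range (len k), φ (shift^[SS len k + r] (zeta hs len src hlen))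
        - ∑ r ∈ Finset.range (len k), φ (shift^[r] (src k))‖
        + ‖φ (shift^[SS len k + len k] (zeta hs len src hlen))‖ := by
        rw [add_sub_right_comm]
        exact norm_add_le _ _
    _ ≤ (len k : ℝ) * ε + (2 * W + 1) * (2 * C) := by nlinarith

lemma sum_decomp (f : ℕ → EuclideanSpace ℝ (Fin N)) {K1 K2 : ℕ} (h : K1 ≤ K2) :
    ∑ i ∈ Finset.Ico (SS len K1) (SS len K2), f i
      = ∑ k ∈ Finset.Ico K1 K2, ∑ r ∈ Finset.range (len k + 1), f (SS len k + r) := by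
  induction K2, h using Nat.le_induction with
  | base => simp
  | succ K2 hK ih =>
    have hinner : ∑ i ∈ Finset.Ico (SS len K2) (SS len (K2 + 1)), f i
        = ∑ r ∈ Finset.range (len K2 + 1), f (SS len K2 + r) := by
      rw [Finset.sum_Ico_eq_sum_range,
        show SS len (K2 + 1) - SS len K2 = len K2 + 1 from by rw [SS_succ]; omega]
    rw [← Finset.sum_Ico_consecutive _ ((SS_strictMono len).monotone hK)
        ((SS_strictMono len).monotone (Nat.le_succ _)),
      Finset.sum_Ico_succ_top hK, ih, hinner]

include hC hW hε hlen in
lemma run_est (x : SymbSpace s) (L : ℕ) {K1 K2 : ℕ} (h : K1 ≤ K2)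
    (hsrc : ∀ k, K1 ≤ k → k < K2 → src k = x ∧ len k = L) :
    ‖∑ i ∈ Finset.Ico (SS len K1) (SS len K2), φ (shift^[i] (zeta hs len src hlen))
      - ((K2 - K1 : ℕ) : ℝ) • ∑ r ∈ Finset.range L, φ (shift^[r] x)‖
      ≤ ((K2 - K1 : ℕ) : ℝ) * ((L : ℝ) * ε + (2 * W + 1) * (2 * C)) := by
  rw [sum_decomp len]
  · have hcard : (Finset.Ico K1 K2).card = K2 - K1 := Nat.card_Ico K1 K2
    have hsm : ((K2 - K1 : ℕ) : ℝ) • (∑ r ∈ Finset.range L, φ (shift^[r] x))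
        = ∑ _k ∈ Finset.Ico K1 K2, ∑ r ∈ Finset.range L, φ (shift^[r] x) := by
      rw [Finset.sum_const, hcard, Nat.cast_smul_eq_nsmul ℝ]
    rw [hsm, ← Finset.sum_sub_distrib]
    calc _ ≤ ∑ k ∈ Finset.Ico K1 K2,
        ‖(∑ r ∈ Finset.range (len k + 1), φ (shift^[SS len k + r] (zeta hs len src hlen)))
          - ∑ r ∈ Finset.range L, φ (shift^[r] x)‖ := norm_sum_le _ _
      _ ≤ ∑ _k ∈ Finset.Ico K1 K2, ((L : ℝ) * ε + (2 * W + 1) * (2 * C)) := by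
          refine Finset.sum_le_sum fun k hk => ?_
          rw [Finset.mem_Ico] at hk
          obtain ⟨h1, h2⟩ := hsrc k hk.1 hk.2
          rw [← h1, ← h2]
          exact block_est hs len src hlen φ C hC ε hε W hW k
      _ = _ := by rw [Finset.sum_const, nsmul_eq_mul, hcard]
  · exact h
end Est

section Stage
variable {s : ℕ}

/-- Stage data: `(stage n m j).1` is the index of the first block of stage `j`,
`(stage n m j).2` the total length of all blocks (with glue) before stage `j`. -/
def stage (n m : ℕ → ℕ) : ℕ → ℕ × ℕ
  | 0 => (0, 0)
  | (j + 1) =>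
      let st := stage n m j
      let p := j * st.2 + 1
      let q := j * (st.2 + p * (n j + 1)) + (j + 1) * (n (j + 1) + 1) + 1
      (st.1 + p + q, st.2 + p * (n j + 1) + q * (m j + 1))

variable (n m : ℕ → ℕ)

def Bf (j : ℕ) : ℕ := (stage n m j).1
def prevf (j : ℕ) : ℕ := (stage n m j).2
def pf (j : ℕ) : ℕ := j * prevf n m j + 1
def qf (j : ℕ) : ℕ :=
  j * (prevf n m j + pf n m j * (n j + 1)) + (j + 1) * (n (j + 1) + 1) + 1

lemma Bf_zero : Bf n m 0 = 0 := rfl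
lemma prevf_zero : prevf n m 0 = 0 := rfl

lemma Bf_succ (j : ℕ) : Bf n m (j + 1) = Bf n m j + pf n m j + qf n m j := rfl

lemma prevf_succ (j : ℕ) :
    prevf n m (j + 1) = prevf n m j + pf n m j * (n j + 1) + qf n m j * (m j + 1) := rfl

lemma pf_pos (j : ℕ) : 1 ≤ pf n m j := by simp [pf]
lemma qf_pos (j : ℕ) : 1 ≤ qf n m j := by simp [qf]

lemma Bf_strictMono : StrictMono (Bf n m) := by
  apply strictMono_nat_of_lt_succ
  intro j
  have h1 := pf_pos n m j
  have h2 := qf_pos n m j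
  rw [Bf_succ]
  omega

/-- Block lengths of the flattened construction. -/
noncomputable def lenF (k : ℕ) : ℕ :=
  if k - Bf n m (loc (Bf n m) k) < pf n m (loc (Bf n m) k) then n (loc (Bf n m) k)
  else m (loc (Bf n m) k)

/-- Block sources of the flattened construction. -/
noncomputable def srcF (ξ η : SymbSpace s) (k : ℕ) : SymbSpace s :=
  if k - Bf n m (loc (Bf n m) k) < pf n m (loc (Bf n m) k) then ξ else η

lemma loc_Bf {j d : ℕ} (hd : d < pf n m j + qf n m j) : loc (Bf n m) (Bf n m j + d) = j :=
  loc_eq (Bf_strictMono n m) (Bf_zero n m) (Nat.le_add_right _ _) (by rw [Bf_succ]; omega)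

lemma lenF_eval {j d : ℕ} (hd : d < pf n m j + qf n m j) :
    lenF n m (Bf n m j + d) = if d < pf n m j then n j else m j := by
  rw [lenF, loc_Bf n m hd]
  rw [show Bf n m j + d - Bf n m j = d from by omega]

lemma srcF_eval (ξ η : SymbSpace s) {j d : ℕ} (hd : d < pf n m j + qf n m j) :
    srcF n m ξ η (Bf n m j + d) = if d < pf n m j then ξ else η := by
  rw [srcF, loc_Bf n m hd]
  rw [show Bf n m j + d - Bf n m j = d from by omega]

lemma lenF_pos (hn0 : ∀ j, 0 < n j) (hm0 : ∀ j, 0 < m j) (k : ℕ) : 1 ≤ lenF n m k := by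
  set j := loc (Bf n m) k with hj
  have h1 : Bf n m j ≤ k := loc_le (Bf_zero n m) k
  have h2 : k < Bf n m (j + 1) := lt_loc_succ (Bf_strictMono n m) (Bf_zero n m) k
  rw [Bf_succ] at h2
  have hd : k - Bf n m j < pf n m j + qf n m j := by omega
  have := lenF_eval n m (j := j) (d := k - Bf n m j) hd
  rw [show Bf n m j + (k - Bf n m j) = k from by omega] at this
  rw [this]
  split
  · exact hn0 j
  · exact hm0 j

lemma SS_xi_run {j : ℕ} (hB : SS (lenF n m) (Bf n m j) = prevf n m j) :
    ∀ i ≤ pf n m j, SS (lenF n m) (Bf n m j + i) = prevf n m j + i * (n j + 1) := by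
  intro i hi
  induction i with
  | zero => simpa using hB
  | succ i ih =>
    rw [show Bf n m j + (i + 1) = (Bf n m j + i) + 1 from by ring, SS_succ,
      ih (by omega), lenF_eval n m (j := j) (d := i)
        (by have := qf_pos n m j; omega), if_pos (by omega)]
    ring

lemma SS_eta_run {j : ℕ} (hB : SS (lenF n m) (Bf n m j) = prevf n m j) :
    ∀ i ≤ qf n m j, SS (lenF n m) (Bf n m j + pf n m j + i)
      = prevf n m j + pf n m j * (n j + 1) + i * (m j + 1) := by
  intro i hi
  induction i with
  | zero =>
    simpa using SS_xi_run n m hB (pf n m j) (le_refl _)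
  | succ i ih =>
    rw [show Bf n m j + pf n m j + (i + 1) = (Bf n m j + pf n m j + i) + 1 from by ring, SS_succ,
      ih (by omega),
      show Bf n m j + pf n m j + i = Bf n m j + (pf n m j + i) from by ring,
      lenF_eval n m (j := j) (d := pf n m j + i) (by omega), if_neg (by omega)]
    ring

lemma SS_Bf (j : ℕ) : SS (lenF n m) (Bf n m j) = prevf n m j := by
  induction j with
  | zero => rw [Bf_zero, prevf_zero, SS_zero]
  | succ j ih =>
    rw [Bf_succ, prevf_succ]
    exact SS_eta_run n m ih (qf n m j) (le_refl _)
end Stage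
end RotAux


set_option maxHeartbeats 2000000 in
open RotAux in
/-- For `s ≥ 3`, `N ≥ 1` and a continuous observable `φ : Σ_s → ℝ^N`,
the general rotation set `G_φ` is convex. -/
theorem general_rotation_set_convex (s N : ℕ) (hs : 3 ≤ s) (hN : 1 ≤ N)
    (φ : SymbSpace s → EuclideanSpace ℝ (Fin N)) (hφ : Continuous φ) :
    Convex ℝ (GenRot φ) := by
  intro x hx y hy t b ht hb htb
  obtain ⟨ξ, n, hn, hn0, hna⟩ := hx
  obtain ⟨η, m, hm, hm0, hmb⟩ := hy
  classical
  -- a uniform bound on ‖φ‖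
  obtain ⟨C, hC0, hC⟩ : ∃ C : ℝ, 0 ≤ C ∧ ∀ z, ‖φ z‖ ≤ C := by
    obtain ⟨R, hR⟩ := (isCompact_range hφ).isBounded.exists_norm_le
    exact ⟨max R 0, le_max_right _ _,
      fun z => le_trans (hR _ (Set.mem_range_self z)) (le_max_left _ _)⟩
  -- growth of the given time sequences
  have hngrow : ∀ j, j + 1 ≤ n j := by
    intro j
    induction j with
    | zero => exact hn0 0
    | succ j ih => have := hn (show j < j + 1 by omega); omega
  have hmgrow : ∀ j, j + 1 ≤ m j := by
    intro j
    induction j with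
    | zero => exact hm0 0
    | succ j ih => have := hm (show j < j + 1 by omega); omega
  set len := lenF n m with hlen_def
  set src := srcF n m ξ η with hsrc_def
  have hlen : ∀ k, 1 ≤ len k := lenF_pos n m hn0 hm0
  set ζ := zeta hs len src hlen with hζ_def
  set B := Bf n m with hB_def
  set prev := prevf n m with hprev_def
  set pp := RotAux.pf n m with hpp_def
  set qq := RotAux.qf n m with hqq_def
  -- basic growth facts on stages
  have hprev_ge : ∀ j, j * (n j + 1) ≤ prev j := by
    intro j
    cases j with
    | zero => simp
    | succ j =>
      have e1 : prev (j + 1) = prev j + pp j * (n j + 1) + qq j * (m j + 1) :=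
        prevf_succ n m j
      have e2 : qq j = j * (prev j + pp j * (n j + 1)) + (j + 1) * (n (j + 1) + 1) + 1 := rfl
      have e3 : qq j ≤ qq j * (m j + 1) := Nat.le_mul_of_pos_right _ (by omega)
      have e4 : (j + 1) * (n (j + 1) + 1) ≤ qq j := by omega
      omega
  -- selection of partial indices inside each ξ-run
  have hex : ∀ j : ℕ, ∃ i : ℕ, i ≤ pp j ∧
      (t - 2 / (j : ℝ)) * ((prev j : ℝ) + i * (n j + 1)) ≤ (i : ℝ) * n j := by
    intro j
    have ht1 : t ≤ 1 := by linarith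
    rcases Nat.eq_zero_or_pos j with hj | hj
    · refine ⟨0, Nat.zero_le _, ?_⟩
      subst hj
      have : prev 0 = 0 := prevf_zero n m
      simp [this]
    · refine ⟨pp j, le_refl _, ?_⟩
      have hj1 : (1 : ℝ) ≤ j := by exact_mod_cast hj
      have hj0 : (0 : ℝ) < j := by linarith
      -- j * prev j ≤ pp j * n j  and  j * pp j ≤ pp j * n j
      have hn1 : 1 ≤ n j := hn0 j
      have hjP : (j : ℝ) * prev j ≤ (pp j : ℝ) * n j := by
        have a1 : j * prev j ≤ pp j := by
          have : pp j = j * prev j + 1 := rfl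
          omega
        have a2 : pp j ≤ pp j * n j := Nat.le_mul_of_pos_right _ (hn0 j)
        exact_mod_cast a1.trans a2
      have hjp : (j : ℝ) * pp j ≤ (pp j : ℝ) * n j := by
        have a3 : pp j * j ≤ pp j * n j :=
          Nat.mul_le_mul_left _ (by have := hngrow j; omega)
        have : j * pp j ≤ pp j * n j := by
          rw [Nat.mul_comm j (pp j)]; exact a3
        exact_mod_cast this
      set A : ℝ := (pp j : ℝ) * n j with hA
      set Bv : ℝ := (prev j : ℝ) + (pp j : ℝ) * ((n j : ℝ) + 1) with hBv
      have hBexp : Bv = (prev j : ℝ) + A + pp j := by rw [hBv, hA]; ring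
      have hA0 : 0 ≤ A := by positivity
      have hB0 : 0 ≤ Bv := by rw [hBexp]; positivity
      have hP' : (prev j : ℝ) ≤ A / j := by
        rw [le_div_iff₀ hj0]
        linarith [hjP]
      have hpp' : (pp j : ℝ) ≤ A / j := by
        rw [le_div_iff₀ hj0]
        linarith [hjp]
      have hAB : A ≤ Bv := by
        have c1 : (0:ℝ) ≤ (prev j : ℝ) := Nat.cast_nonneg _
        have c2 : (0:ℝ) ≤ (pp j : ℝ) := Nat.cast_nonneg _
        linarith [hBexp]
      have step1 : (t - 2 / (j : ℝ)) * Bv ≤ (1 - 2 / j) * Bv :=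
        mul_le_mul_of_nonneg_right (by linarith) hB0
      have step2 : (2 / (j : ℝ)) * A ≤ (2 / j) * Bv :=
        mul_le_mul_of_nonneg_left hAB (by positivity)
      have step3 : (2 / (j : ℝ)) * A = 2 * (A / j) := by ring
      have step4 : (1 - 2 / (j : ℝ)) * Bv ≤ A := by
        have e : (1 - 2 / (j : ℝ)) * Bv = Bv - (2 / j) * Bv := by ring
        rw [e]
        linarith [hBexp]
      linarith
  set ii : ℕ → ℕ := fun j => Nat.find (hex j) with hii_def
  have hii_le : ∀ j, ii j ≤ pp j := fun j => (Nat.find_spec (hex j)).1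
  have hii_spec : ∀ j : ℕ, (t - 2 / (j : ℝ)) * ((prev j : ℝ) + ii j * (n j + 1))
      ≤ (ii j : ℝ) * n j := fun j => (Nat.find_spec (hex j)).2
  have hii_upper : ∀ j : ℕ, 1 ≤ j → (ii j : ℝ) * n j ≤ t * ((prev j : ℝ) + ii j * (n j + 1)) := by
    intro j hj
    have hj1 : (1 : ℝ) ≤ j := by exact_mod_cast hj
    have hj0 : (0 : ℝ) < j := by linarith
    cases h : ii j with
    | zero =>
      simpa [h] using mul_nonneg ht (Nat.cast_nonneg (prev j))
    | succ i =>
      have hipp : i ≤ pp j := le_trans (by omega) (hii_le j)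
      have hlt : (i : ℝ) * n j < (t - 2 / j) * ((prev j : ℝ) + i * (n j + 1)) := by
        have hmin := Nat.find_min (hex j) (show i < ii j by omega)
        push_neg at hmin
        exact hmin hipp
      have hjn : (j : ℝ) * n j ≤ (prev j : ℝ) := by
        have h1 : j * n j ≤ j * (n j + 1) := Nat.mul_le_mul_left _ (by omega)
        exact_mod_cast h1.trans (hprev_ge j)
      push_cast [Nat.succ_eq_add_one]
      set nr : ℝ := (n j : ℝ) with hnr
      set P : ℝ := (prev j : ℝ) with hP
      have hnr0 : 0 ≤ nr := Nat.cast_nonneg _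
      have hi0 : (0 : ℝ) ≤ (i : ℝ) := Nat.cast_nonneg _
      set T' : ℝ := P + i * (nr + 1) with hT'
      have hT'0 : 0 ≤ T' := by positivity
      have h2T : 2 * nr ≤ (2 / j) * T' := by
        have h3 : nr * j ≤ T' := by
          have : nr * j = j * nr := by ring
          rw [this]
          have : (0:ℝ) ≤ (i : ℝ) * (nr + 1) := by positivity
          linarith
        have h4 : nr ≤ T' / j := (le_div_iff₀ hj0).mpr h3
        have h5 : (2 / (j : ℝ)) * T' = 2 * (T' / j) := by ring
        linarith
      have h6 : t * T' ≤ t * (T' + (nr + 1)) :=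
        mul_le_mul_of_nonneg_left (by linarith) ht
      have h7 : t * (T' + (nr + 1)) = t * (P + (i + 1) * (nr + 1)) := by
        rw [hT']; ring
      have hexp : (t - 2 / (j : ℝ)) * T' = t * T' - (2 / j) * T' := by ring
      linarith
  -- the evaluation times
  set T : ℕ → ℕ := fun k => SS len (B (k + 1) + ii (k + 1)) with hT_def
  have hT_eq : ∀ k, T k = prev (k + 1) + ii (k + 1) * (n (k + 1) + 1) := by
    intro k
    exact SS_xi_run n m (SS_Bf n m (k + 1)) (ii (k + 1)) (hii_le (k + 1))
  have hT_pos : ∀ k, 0 < T k := by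
    intro k
    have e1 : prev (k + 1) = prev k + pp k * (n k + 1) + qq k * (m k + 1) := prevf_succ n m k
    have e2 : 0 < qq k * (m k + 1) := Nat.mul_pos (qf_pos n m k) (Nat.succ_pos _)
    have := hT_eq k
    omega
  have hT_mono : StrictMono T := by
    apply strictMono_nat_of_lt_succ
    intro k
    have e1 : prev (k + 1 + 1) = prev (k + 1) + pp (k + 1) * (n (k + 1) + 1)
        + qq (k + 1) * (m (k + 1) + 1) := prevf_succ n m (k + 1)
    have e2 : 0 < qq (k + 1) * (m (k + 1) + 1) := Nat.mul_pos (qf_pos n m _) (Nat.succ_pos _)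
    have e3 : ii (k + 1) * (n (k + 1) + 1) ≤ pp (k + 1) * (n (k + 1) + 1) :=
      Nat.mul_le_mul_right _ (hii_le (k + 1))
    have e4 := hT_eq k
    have e5 := hT_eq (k + 1)
    omega
  -- the coefficients
  set α : ℕ → ℝ := fun k => ((ii (k + 1) : ℝ) * n (k + 1)) / T k with hα_def
  set β : ℕ → ℝ := fun k => ((qq k : ℝ) * m k) / T k with hβ_def
  have hα_lim : Tendsto α atTop (nhds t) := by
    have hlow : ∀ k : ℕ, t - 2 * (1 / ((k : ℝ) + 1)) ≤ α k := by
      intro k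
      have hT0 : (0 : ℝ) < T k := by exact_mod_cast hT_pos k
      have hTr : (T k : ℝ) = (prev (k + 1) : ℝ) + ii (k + 1) * (n (k + 1) + 1) := by
        exact_mod_cast hT_eq k
      show t - 2 * (1 / ((k : ℝ) + 1)) ≤ ((ii (k + 1) : ℝ) * n (k + 1)) / T k
      rw [le_div_iff₀ hT0]
      have e2 : (2 : ℝ) / ((k : ℝ) + 1) = 2 * (1 / ((k : ℝ) + 1)) := by ring
      have hsp := hii_spec (k + 1)
      push_cast at hsp
      rw [e2] at hsp
      push_cast at hTr
      rw [hTr]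
      linarith [hsp]
    have hhigh : ∀ k : ℕ, α k ≤ t := by
      intro k
      have hT0 : (0 : ℝ) < T k := by exact_mod_cast hT_pos k
      have hTr : (T k : ℝ) = (prev (k + 1) : ℝ) + ii (k + 1) * (n (k + 1) + 1) := by
        exact_mod_cast hT_eq k
      show ((ii (k + 1) : ℝ) * n (k + 1)) / T k ≤ t
      rw [div_le_iff₀ hT0, hTr]
      exact hii_upper (k + 1) (by omega)
    refine tendsto_of_tendsto_of_tendsto_of_le_of_le ?_ tendsto_const_nhds hlow hhigh
    have h0 := tendsto_one_div_add_atTop_nhds_zero_nat (𝕜 := ℝ)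
    have h1 : Tendsto (fun k : ℕ => 2 * (1 / ((k : ℝ) + 1))) atTop (nhds (2 * 0)) :=
      h0.const_mul 2
    have h2 : Tendsto (fun _ : ℕ => t) atTop (nhds t) := tendsto_const_nhds
    simpa using h2.sub h1
  set prevp : ℕ → ℕ := fun k => prev k + pp k * (n k + 1) with hprevp_def
  have hTnat : ∀ k, T k = prevp k + qq k * (m k + 1) + ii (k + 1) * (n (k + 1) + 1) := by
    intro k
    have e0 : prevp k = prev k + pp k * (n k + 1) := rfl
    have e1 : prev (k + 1) = prev k + pp k * (n k + 1) + qq k * (m k + 1) :=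
      prevf_succ n m k
    have e2 := hT_eq k
    omega
  have hq_ge : ∀ k, k * prevp k ≤ qq k := by
    intro k
    have e : qq k = k * (prev k + pp k * (n k + 1)) + (k + 1) * (n (k + 1) + 1) + 1 := rfl
    have e0 : prevp k = prev k + pp k * (n k + 1) := rfl
    rw [e0]
    omega
  have hn1 : ∀ k, (k + 1) * prevp k ≤ T k := by
    intro k
    have e1 := hTnat k
    have h2 := hq_ge k
    have e3 : qq k ≤ qq k * (m k + 1) := Nat.le_mul_of_pos_right _ (Nat.succ_pos _)
    have e4 : (k + 1) * prevp k = k * prevp k + prevp k := by ring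
    omega
  have hn2 : ∀ k, (k + 1) * qq k ≤ T k := by
    intro k
    have e1 := hTnat k
    have h2 : (k + 1) * qq k ≤ (m k + 1) * qq k :=
      Nat.mul_le_mul_right _ (by have := hmgrow k; omega)
    have h3 : (m k + 1) * qq k = qq k * (m k + 1) := Nat.mul_comm _ _
    omega
  have hn3 : ∀ k, (k + 1) * ii (k + 1) ≤ T k := by
    intro k
    have e1 := hTnat k
    have h2 : (k + 1) * ii (k + 1) ≤ (n (k + 1) + 1) * ii (k + 1) :=
      Nat.mul_le_mul_right _ (by have := hngrow (k + 1); omega)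
    have h3 : (n (k + 1) + 1) * ii (k + 1) = ii (k + 1) * (n (k + 1) + 1) := Nat.mul_comm _ _
    omega
  have hdiv : ∀ (a k : ℕ), (k + 1) * a ≤ T k → (a : ℝ) / (T k) ≤ 1 / ((k : ℝ) + 1) := by
    intro a k h
    have hT0 : (0 : ℝ) < T k := by exact_mod_cast hT_pos k
    have hk0 : (0 : ℝ) < (k : ℝ) + 1 := by positivity
    rw [div_le_div_iff₀ hT0 hk0]
    have h' : (((k + 1) * a : ℕ) : ℝ) ≤ ((T k : ℕ) : ℝ) := by exact_mod_cast h
    push_cast at h'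
    linarith
  have hδ0 : ∀ k : ℕ, 0 ≤ ((prevp k : ℝ) + qq k + ii (k + 1)) / T k := by
    intro k
    positivity
  have hδ3 : ∀ k : ℕ, ((prevp k : ℝ) + qq k + ii (k + 1)) / T k ≤ 3 * (1 / ((k : ℝ) + 1)) := by
    intro k
    have d1 := hdiv (prevp k) k (hn1 k)
    have d2 := hdiv (qq k) k (hn2 k)
    have d3 := hdiv (ii (k + 1)) k (hn3 k)
    have e : ((prevp k : ℝ) + qq k + ii (k + 1)) / T k
        = (prevp k : ℝ) / T k + (qq k : ℝ) / T k + (ii (k + 1) : ℝ) / T k := by ring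
    rw [e]
    linarith
  have hδlim : Tendsto (fun k : ℕ => ((prevp k : ℝ) + qq k + ii (k + 1)) / T k)
      atTop (nhds 0) := by
    have h1 : Tendsto (fun k : ℕ => 3 * (1 / ((k : ℝ) + 1))) atTop (nhds (3 * 0)) :=
      tendsto_one_div_add_atTop_nhds_zero_nat.const_mul 3
    exact tendsto_of_tendsto_of_tendsto_of_le_of_le tendsto_const_nhds
      (by simpa using h1) hδ0 hδ3
  have hβ_lim : Tendsto β atTop (nhds b) := by
    have hδ : ∀ k : ℕ, β k = 1 - α k - ((prevp k : ℝ) + qq k + ii (k + 1)) / T k := by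
      intro k
      have hT0 : (0 : ℝ) < T k := by exact_mod_cast hT_pos k
      have hTr : (T k : ℝ) = (prevp k : ℝ) + (qq k : ℝ) * ((m k : ℝ) + 1)
          + (ii (k + 1) : ℝ) * ((n (k + 1) : ℝ) + 1) := by exact_mod_cast hTnat k
      show ((qq k : ℝ) * m k) / T k
          = 1 - ((ii (k + 1) : ℝ) * n (k + 1)) / T k
            - ((prevp k : ℝ) + qq k + ii (k + 1)) / T k
      ring_nf at hTr
      field_simp
      ring_nf
      linarith
    have hcongr : Tendsto (fun k : ℕ => 1 - α k
        - ((prevp k : ℝ) + qq k + ii (k + 1)) / T k) atTop (nhds (1 - t - 0)) := by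
      have hcst : Tendsto (fun _ : ℕ => (1 : ℝ)) atTop (nhds 1) := tendsto_const_nhds
      exact (hcst.sub hα_lim).sub hδlim
    have hb' : b = 1 - t - 0 := by linarith
    rw [hb']
    exact hcongr.congr fun k => (hδ k).symm
  -- the main estimate
  have hmain : Tendsto (fun k => birk φ (T k) ζ
      - α k • birk φ (n (k + 1)) ξ - β k • birk φ (m k) η) atTop (nhds 0) := by
    rw [NormedAddCommGroup.tendsto_nhds_zero]
    intro ε' hε'
    have hε : 0 < ε' / 2 := by linarith
    obtain ⟨W, hW⟩ := modulus φ hφ hε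
    set E0 : ℝ := (2 * (W : ℝ) + 1) * (2 * C) with hE0_def
    have hE00 : 0 ≤ E0 := by positivity
    have hbound : ∀ k : ℕ, ‖birk φ (T k) ζ - α k • birk φ (n (k + 1)) ξ - β k • birk φ (m k) η‖
        ≤ ε' / 2 + (C * prevp k + ((qq k : ℝ) + ii (k + 1)) * E0) / T k := by
      intro k
      have hT0 : (0 : ℝ) < T k := by exact_mod_cast hT_pos k
      have hnr0 : (0 : ℝ) < (n (k + 1) : ℝ) := by exact_mod_cast hn0 (k + 1)
      have hmr0 : (0 : ℝ) < (m k : ℝ) := by exact_mod_cast hm0 k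
      have eB : B (k + 1) = B k + pp k + qq k := Bf_succ n m k
      have hk01 : B k + pp k ≤ B (k + 1) := by omega
      have hk12 : B (k + 1) ≤ B (k + 1) + ii (k + 1) := Nat.le_add_right _ _
      have hSS0 : SS len (B k + pp k) = prevp k := by
        have h := SS_xi_run n m (SS_Bf n m k) (pp k) le_rfl
        have e0 : prevp k = prev k + pp k * (n k + 1) := rfl
        rw [e0]
        exact h
      have hSS2 : SS len (B (k + 1) + ii (k + 1)) = T k := rfl
      -- source/length identification on the two runs
      have hsrcη : ∀ k', B k + pp k ≤ k' → k' < B (k + 1) → src k' = η ∧ len k' = m k := by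
        intro k' h1 h2
        have epp : RotAux.pf n m k = pp k := rfl
        have hd2 : k' - B k < pp k + qq k := by omega
        have hk' : k' = B k + (k' - B k) := by omega
        rw [hk', hsrc_def, hlen_def, srcF_eval n m ξ η hd2, lenF_eval n m hd2,
          if_neg (by omega), if_neg (by omega)]
        exact ⟨rfl, rfl⟩
      have hsrcξ : ∀ k', B (k + 1) ≤ k' → k' < B (k + 1) + ii (k + 1) →
          src k' = ξ ∧ len k' = n (k + 1) := by
        intro k' h1 h2
        have hle : ii (k + 1) ≤ pp (k + 1) := hii_le (k + 1)
        have hq1 : 1 ≤ qq (k + 1) := qf_pos n m (k + 1)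
        have epp : RotAux.pf n m (k + 1) = pp (k + 1) := rfl
        have hd2 : k' - B (k + 1) < pp (k + 1) + qq (k + 1) := by omega
        have hk' : k' = B (k + 1) + (k' - B (k + 1)) := by omega
        rw [hk', hsrc_def, hlen_def, srcF_eval n m ξ η hd2, lenF_eval n m hd2,
          if_pos (by omega), if_pos (by omega)]
        exact ⟨rfl, rfl⟩
      -- the three pieces
      have hb0 : ‖∑ i' ∈ Finset.Ico 0 (SS len (B k + pp k)),
          φ (shift^[i'] (zeta hs len src hlen))‖ ≤ (prevp k : ℝ) * C := by
        have h := sum_crude φ C hC (zeta hs len src hlen)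
          (Finset.Ico 0 (SS len (B k + pp k)))
        refine le_trans h (le_of_eq ?_)
        rw [Nat.card_Ico, Nat.sub_zero, hSS0]
      have hbη := run_est hs len src hlen φ C hC (ε' / 2) hε W hW η (m k) hk01 hsrcη
      rw [show B (k + 1) - (B k + pp k) = qq k from by omega] at hbη
      have hbξ := run_est hs len src hlen φ C hC (ε' / 2) hε W hW ξ (n (k + 1)) hk12 hsrcξ
      rw [show B (k + 1) + ii (k + 1) - B (k + 1) = ii (k + 1) from by omega] at hbξ
      -- splitting the Birkhoff sum
      have hsplit : ∑ i' ∈ Finset.range (T k), φ (shift^[i'] (zeta hs len src hlen))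
          = (∑ i' ∈ Finset.Ico 0 (SS len (B k + pp k)),
              φ (shift^[i'] (zeta hs len src hlen)))
            + (∑ i' ∈ Finset.Ico (SS len (B k + pp k)) (SS len (B (k + 1))),
              φ (shift^[i'] (zeta hs len src hlen)))
            + (∑ i' ∈ Finset.Ico (SS len (B (k + 1))) (SS len (B (k + 1) + ii (k + 1))),
              φ (shift^[i'] (zeta hs len src hlen))) := by
        rw [Finset.sum_Ico_consecutive _ (Nat.zero_le _) ((SS_strictMono len).monotone hk01),
          Finset.sum_Ico_consecutive _ (Nat.zero_le _) ((SS_strictMono len).monotone hk12),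
          Finset.range_eq_Ico, hSS2]
      -- the vector identity
      have hid : birk φ (T k) ζ - α k • birk φ (n (k + 1)) ξ - β k • birk φ (m k) η
          = (T k : ℝ)⁻¹ • ((∑ i' ∈ Finset.Ico 0 (SS len (B k + pp k)),
              φ (shift^[i'] (zeta hs len src hlen)))
            + ((∑ i' ∈ Finset.Ico (SS len (B k + pp k)) (SS len (B (k + 1))),
              φ (shift^[i'] (zeta hs len src hlen)))
              - (qq k : ℝ) • ∑ r ∈ Finset.range (m k), φ (shift^[r] η))
            + ((∑ i' ∈ Finset.Ico (SS len (B (k + 1))) (SS len (B (k + 1) + ii (k + 1))),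
              φ (shift^[i'] (zeta hs len src hlen)))
              - (ii (k + 1) : ℝ) • ∑ r ∈ Finset.range (n (k + 1)), φ (shift^[r] ξ))) := by
        rw [hζ_def, birk, birk, birk, hsplit, hα_def, hβ_def]
        simp only []
        rw [smul_smul, smul_smul]
        rw [show (ii (k + 1) : ℝ) * n (k + 1) / T k * (n (k + 1) : ℝ)⁻¹
            = (T k : ℝ)⁻¹ * ii (k + 1) from by field_simp]
        rw [show (qq k : ℝ) * m k / T k * (m k : ℝ)⁻¹
            = (T k : ℝ)⁻¹ * qq k from by field_simp]
        rw [← smul_smul, ← smul_smul, ← smul_sub, ← smul_sub]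
        congr 1
        abel
      rw [hid, norm_smul, Real.norm_eq_abs, abs_of_pos (by positivity)]
      have hstep : ‖(∑ i' ∈ Finset.Ico 0 (SS len (B k + pp k)),
              φ (shift^[i'] (zeta hs len src hlen)))
            + ((∑ i' ∈ Finset.Ico (SS len (B k + pp k)) (SS len (B (k + 1))),
              φ (shift^[i'] (zeta hs len src hlen)))
              - (qq k : ℝ) • ∑ r ∈ Finset.range (m k), φ (shift^[r] η))
            + ((∑ i' ∈ Finset.Ico (SS len (B (k + 1))) (SS len (B (k + 1) + ii (k + 1))),
              φ (shift^[i'] (zeta hs len src hlen)))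
              - (ii (k + 1) : ℝ) • ∑ r ∈ Finset.range (n (k + 1)), φ (shift^[r] ξ))‖
          ≤ (prevp k : ℝ) * C + (qq k : ℝ) * ((m k : ℝ) * (ε' / 2) + E0)
            + (ii (k + 1) : ℝ) * ((n (k + 1) : ℝ) * (ε' / 2) + E0) := by
        refine le_trans (norm_add₃_le) ?_
        rw [hE0_def]
        exact add_le_add (add_le_add hb0 hbη) hbξ
      have hTub : ((qq k * m k + ii (k + 1) * n (k + 1) : ℕ) : ℝ) ≤ (T k : ℝ) := by
        have e1 := hTnat k
        have e2 : qq k * (m k + 1) = qq k * m k + qq k := by ring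
        have e3 : ii (k + 1) * (n (k + 1) + 1) = ii (k + 1) * n (k + 1) + ii (k + 1) := by ring
        have : qq k * m k + ii (k + 1) * n (k + 1) ≤ T k := by omega
        exact_mod_cast this
      push_cast at hTub
      have hmul : (T k : ℝ)⁻¹ * ((prevp k : ℝ) * C + (qq k : ℝ) * ((m k : ℝ) * (ε' / 2) + E0)
            + (ii (k + 1) : ℝ) * ((n (k + 1) : ℝ) * (ε' / 2) + E0))
          ≤ ε' / 2 + (C * prevp k + ((qq k : ℝ) + ii (k + 1)) * E0) / T k := by
        rw [inv_mul_eq_div, div_le_iff₀ hT0]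
        have hrhs : (ε' / 2 + (C * (prevp k : ℝ) + ((qq k : ℝ) + ii (k + 1)) * E0) / T k)
            * T k = ε' / 2 * T k + (C * (prevp k : ℝ)
              + ((qq k : ℝ) + ii (k + 1)) * E0) := by
          field_simp
        rw [hrhs]
        have hmm := mul_le_mul_of_nonneg_right
          (hTub) (le_of_lt hε)
        nlinarith [hmm]
      calc (T k : ℝ)⁻¹ * ‖_‖ ≤ (T k : ℝ)⁻¹ * ((prevp k : ℝ) * C
            + (qq k : ℝ) * ((m k : ℝ) * (ε' / 2) + E0)
            + (ii (k + 1) : ℝ) * ((n (k + 1) : ℝ) * (ε' / 2) + E0)) := by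
            exact mul_le_mul_of_nonneg_left hstep (by positivity)
        _ ≤ _ := hmul
    have htail : Tendsto (fun k : ℕ => (C * prevp k + ((qq k : ℝ) + ii (k + 1)) * E0) / T k)
        atTop (nhds 0) := by
      have hub : ∀ k : ℕ, (C * prevp k + ((qq k : ℝ) + ii (k + 1)) * E0) / T k
          ≤ (C + 2 * E0) * (1 / ((k : ℝ) + 1)) := by
        intro k
        have d1 := hdiv (prevp k) k (hn1 k)
        have d2 := hdiv (qq k) k (hn2 k)
        have d3 := hdiv (ii (k + 1)) k (hn3 k)
        have e : (C * prevp k + ((qq k : ℝ) + ii (k + 1)) * E0) / T k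
            = C * ((prevp k : ℝ) / T k) + E0 * ((qq k : ℝ) / T k)
              + E0 * ((ii (k + 1) : ℝ) / T k) := by ring
        rw [e]
        have b1 := mul_le_mul_of_nonneg_left d1 hC0
        have b2 := mul_le_mul_of_nonneg_left d2 hE00
        have b3 := mul_le_mul_of_nonneg_left d3 hE00
        have e2 : (C + 2 * E0) * (1 / ((k : ℝ) + 1)) = C * (1 / ((k : ℝ) + 1))
            + E0 * (1 / ((k : ℝ) + 1)) + E0 * (1 / ((k : ℝ) + 1)) := by ring
        linarith
      have hlb : ∀ k : ℕ, 0 ≤ (C * prevp k + ((qq k : ℝ) + ii (k + 1)) * E0) / T k := by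
        intro k
        have h1 : (0 : ℝ) ≤ C * prevp k := mul_nonneg hC0 (Nat.cast_nonneg _)
        have h2 : (0 : ℝ) ≤ ((qq k : ℝ) + ii (k + 1)) * E0 :=
          mul_nonneg (by positivity) hE00
        exact div_nonneg (by linarith) (Nat.cast_nonneg _)
      have h1 : Tendsto (fun k : ℕ => (C + 2 * E0) * (1 / ((k : ℝ) + 1))) atTop
          (nhds ((C + 2 * E0) * 0)) := tendsto_one_div_add_atTop_nhds_zero_nat.const_mul _
      exact tendsto_of_tendsto_of_tendsto_of_le_of_le tendsto_const_nhds
        (by simpa using h1) hlb hub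
    have hev := htail.eventually_lt_const (show (0 : ℝ) < ε' / 2 by linarith)
    filter_upwards [hev] with k hk
    calc ‖birk φ (T k) ζ - α k • birk φ (n (k + 1)) ξ - β k • birk φ (m k) η‖
        ≤ ε' / 2 + (C * prevp k + ((qq k : ℝ) + ii (k + 1)) * E0) / T k := hbound k
      _ < ε' := by linarith
  refine ⟨ζ, T, hT_mono, hT_pos, ?_⟩
  have h1 : Tendsto (fun k => α k • birk φ (n (k + 1)) ξ) atTop (nhds (t • x)) :=
    hα_lim.smul (hna.comp (tendsto_add_atTop_nat 1))
  have h2 : Tendsto (fun k => β k • birk φ (m k) η) atTop (nhds (b • y)) :=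
    hβ_lim.smul hmb
  have := (hmain.add h1).add h2
  have he : ∀ k, birk φ (T k) ζ - α k • birk φ (n (k + 1)) ξ - β k • birk φ (m k) η
      + α k • birk φ (n (k + 1)) ξ + β k • birk φ (m k) η = birk φ (T k) ζ := fun k => by abel
  simp only [he] at this
  simpa using this
end

section
/- Let s ≥ 3 and N ≥ 1, and let φ : Σ_s → ℝ^N be continuous (with respect to the product topology on Σ_s). Then the set P_φ of all convex combinations of rotation vectors of periodic sequences is dense in the general rotation set G_φ: for every ρ ∈ G_φ and every ε > 0 there exist periodic sequences ξ^(1),…,ξ^(k) ∈ Σ_s (each ξ^(i) having a rotation vector ρ_i = ρ_φ(ξ^(i))) and reals t_1,…,t_k ≥ 0 with t_1 + … + t_k = 1 such that ‖t_1 ρ_1 + … + t_k ρ_k − ρ‖ ≤ ε. -/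
open Filter Topology

/-- `ρ` is the rotation vector `ρ_φ(ξ)`, i.e. the limit of the Birkhoff averages exists
and equals `ρ`. -/
def HasRotVec {s N : ℕ} (φ : SymbSpace s → EuclideanSpace ℝ (Fin N))
    (ξ : SymbSpace s) (ρ : EuclideanSpace ℝ (Fin N)) : Prop :=
  Tendsto (fun n => birk φ n ξ) atTop (nhds ρ)

lemma shift_iter_apply {s : ℕ} (x : SymbSpace s) (m : ℕ) (j : ℤ) :
    (shift^[m] x).1 j = x.1 (j + m) := by
  induction m generalizing j with
  | zero => simp
  | succ m ih =>
    rw [Function.iterate_succ_apply', shift, ih]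
    congr 1; push_cast; ring

instance instCompactSymb (s : ℕ) : CompactSpace (SymbSpace s) := by
  unfold SymbSpace
  change CompactSpace ↥{ξ : ℤ → Fin s | ∀ i : ℤ, ξ i ≠ ξ (i + 1)}
  rw [← isCompact_iff_compactSpace]
  apply IsClosed.isCompact
  have : {ξ : ℤ → Fin s | ∀ i : ℤ, ξ i ≠ ξ (i + 1)} = ⋂ i : ℤ, {ξ | ξ i = ξ (i+1)}ᶜ := by
    ext; simp
  rw [this]
  refine isClosed_iInter fun i => (isClosed_compl_iff.mpr ?_)
  have hc : Continuous fun ξ : ℤ → Fin s => ((ξ i, ξ (i+1)) : Fin s × Fin s) :=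
    (continuous_apply i).prodMk (continuous_apply (i+1))
  exact (isOpen_discrete {p : Fin s × Fin s | p.1 = p.2}).preimage hc

def Cyl {s : ℕ} (z : SymbSpace s) (m : ℕ) : Set (SymbSpace s) :=
  {y : SymbSpace s | ∀ j ∈ Finset.Icc (-(m:ℤ)) (m:ℤ), y.1 j = z.1 j}

lemma cont_eval {s : ℕ} (j : ℤ) : Continuous fun y : SymbSpace s => y.1 j :=
  (continuous_apply j).comp continuous_subtype_val

lemma isOpen_cyl {s : ℕ} (z : SymbSpace s) (m : ℕ) : IsOpen (Cyl z m) := by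
  have : Cyl z m = ⋂ j ∈ Finset.Icc (-(m:ℤ)) (m:ℤ), {y : SymbSpace s | y.1 j = z.1 j} := by
    ext y; simp [Cyl]
  rw [this]
  refine isOpen_biInter_finset fun j _ => ?_
  exact (isOpen_discrete {z.1 j}).preimage (cont_eval j)

lemma mem_cyl_self {s : ℕ} (z : SymbSpace s) (m : ℕ) : z ∈ Cyl z m := fun _ _ => rfl

lemma exists_window {s N : ℕ} (φ : SymbSpace s → EuclideanSpace ℝ (Fin N))
    (hφ : Continuous φ) {ε : ℝ} (hε : 0 < ε) :
    ∃ M : ℕ, ∀ x y : SymbSpace s, (∀ j : ℤ, j.natAbs ≤ M → x.1 j = y.1 j) →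
      ‖φ x - φ y‖ ≤ ε := by
  -- each point has a cylinder nbhd mapped into ball of radius ε/2
  have step : ∀ x : SymbSpace s, ∃ m : ℕ, ∀ y ∈ Cyl x m, ‖φ y - φ x‖ < ε / 2 := by
    intro x
    have hV : φ ⁻¹' Metric.ball (φ x) (ε/2) ∈ 𝓝 x := by
      refine hφ.continuousAt.preimage_mem_nhds ?_
      exact Metric.ball_mem_nhds _ (by positivity)
    replace hV := (mem_nhds_subtype {ξ : ℤ → Fin s | ∀ i : ℤ, ξ i ≠ ξ (i + 1)} x _).mp hV
    obtain ⟨u, hu, husub⟩ := hV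
    rw [nhds_pi, Filter.mem_pi] at hu
    obtain ⟨I, hIfin, t, ht, htsub⟩ := hu
    refine ⟨hIfin.toFinset.sup Int.natAbs, fun y hy => ?_⟩
    have : y.1 ∈ Set.pi I t := by
      intro i hi
      have h1 : i.natAbs ≤ hIfin.toFinset.sup Int.natAbs :=
        Finset.le_sup (hIfin.mem_toFinset.mpr hi)
      have h2 : y.1 i = x.1 i := by
        apply hy
        simp only [Finset.mem_Icc]
        omega
      rw [h2]
      exact mem_of_mem_nhds (ht i)
    have : y ∈ φ ⁻¹' Metric.ball (φ x) (ε/2) := husub (htsub this)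
    simpa [Metric.mem_ball, dist_eq_norm] using this
  choose m hm using step
  have hcover : (Set.univ : Set (SymbSpace s)) ⊆ ⋃ x : SymbSpace s, Cyl x (m x) :=
    fun x _ => Set.mem_iUnion.mpr ⟨x, mem_cyl_self x (m x)⟩
  obtain ⟨T, hT⟩ := isCompact_univ.elim_finite_subcover (fun x : SymbSpace s => Cyl x (m x))
    (fun x => isOpen_cyl x (m x)) hcover
  refine ⟨T.sup m, fun x y hxy => ?_⟩
  obtain ⟨z, hzT, hxz⟩ := by
    have := hT (Set.mem_univ x)
    simpa using this
  have hyz : y ∈ Cyl z (m z) := by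
    intro j hj
    have h1 : j.natAbs ≤ m z := by
      simp only [Finset.mem_Icc] at hj; omega
    have h2 : j.natAbs ≤ T.sup m := h1.trans (Finset.le_sup hzT)
    rw [← hxy j h2]
    exact hxz j hj
  have b1 := hm z x hxz
  have b2 := hm z y hyz
  calc ‖φ x - φ y‖ ≤ ‖φ x - φ z‖ + ‖φ z - φ y‖ := norm_sub_le_norm_sub_add_norm_sub _ _ _
    _ ≤ ε/2 + ε/2 := by
        rw [← norm_neg (φ z - φ y)]
        simp only [neg_sub]
        exact add_le_add b1.le b2.le
    _ = ε := by ring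

lemma sum_range_add' {E : Type*} [AddCommMonoid E] (f : ℕ → E) (a b : ℕ) :
    ∑ i ∈ Finset.range (a + b), f i
      = ∑ i ∈ Finset.range a, f i + ∑ i ∈ Finset.range b, f (a + i) := by
  induction b with
  | zero => simp
  | succ b ih =>
    rw [← Nat.add_assoc, Finset.sum_range_succ, ih, Finset.sum_range_succ, add_assoc]

lemma sum_block {E : Type*} [AddCommMonoid E] (f : ℕ → E) (q : ℕ)
    (hf : ∀ i, f (i + q) = f i) (m r : ℕ) :
    ∑ i ∈ Finset.range (q * m + r), f i
      = m • (∑ i ∈ Finset.range q, f i) + ∑ i ∈ Finset.range r, f i := by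
  induction m with
  | zero => simp
  | succ m ih =>
    have h1 : q * (m+1) + r = q + (q * m + r) := by ring
    rw [h1, sum_range_add']
    have h2 : ∀ i, f (q + i) = f i := fun i => by rw [Nat.add_comm, hf]
    simp only [h2]
    rw [ih, succ_nsmul]
    abel

lemma hasRotVec_of_periodic {s N : ℕ} (φ : SymbSpace s → EuclideanSpace ℝ (Fin N))
    (η : SymbSpace s) (q : ℕ) (hq : 0 < q) (hper : shift^[q] η = η)
    (C : ℝ) (hC : ∀ x, ‖φ x‖ ≤ C) : HasRotVec φ η (birk φ q η) := by
  set f : ℕ → EuclideanSpace ℝ (Fin N) := fun i => φ (shift^[i] η) with hf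
  have hfper : ∀ i, f (i + q) = f i := by
    intro i
    simp only [hf, Function.iterate_add_apply, hper]
  set S := ∑ i ∈ Finset.range q, f i with hS
  have hSnorm : ‖S‖ ≤ q * C := by
    calc ‖S‖ ≤ ∑ i ∈ Finset.range q, ‖f i‖ := norm_sum_le _ _
      _ ≤ ∑ _i ∈ Finset.range q, C := Finset.sum_le_sum fun i _ => hC _
      _ = q * C := by simp [mul_comm]
  have hC0 : 0 ≤ C := le_trans (norm_nonneg _) (hC η)
  have key : ∀ n : ℕ, 1 ≤ n → ‖birk φ n η - birk φ q η‖ ≤ 2 * q * C / n := by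
    intro n hn
    have hn0 : (0:ℝ) < n := by exact_mod_cast hn
    have hq0 : (0:ℝ) < q := by exact_mod_cast hq
    set m := n / q with hm
    set r := n % q with hr
    have hdm : q * m + r = n := Nat.div_add_mod n q
    have hrq : r < q := Nat.mod_lt _ hq
    have hsum : ∑ i ∈ Finset.range n, f i = m • S + ∑ i ∈ Finset.range r, f i := by
      rw [← hdm]; exact sum_block f q hfper m r
    set T := ∑ i ∈ Finset.range r, f i with hT
    have hTnorm : ‖T‖ ≤ q * C := by
      calc ‖T‖ ≤ ∑ i ∈ Finset.range r, ‖f i‖ := norm_sum_le _ _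
        _ ≤ ∑ _i ∈ Finset.range r, C := Finset.sum_le_sum fun i _ => hC _
        _ = r * C := by simp [mul_comm]
        _ ≤ q * C := by
            apply mul_le_mul_of_nonneg_right _ hC0
            exact_mod_cast hrq.le
    have e1 : birk φ n η = ((m:ℝ)/n) • S + (n:ℝ)⁻¹ • T := by
      show (n : ℝ)⁻¹ • ∑ i ∈ Finset.range n, f i = _
      rw [hsum, smul_add, ← Nat.cast_smul_eq_nsmul ℝ m S, smul_smul, div_eq_inv_mul]
    have e2 : birk φ q η = ((q:ℝ))⁻¹ • S := rfl
    have hcast : (n:ℝ) = q * m + r := by exact_mod_cast hdm.symm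
    have e3 : (m:ℝ)/n - (q:ℝ)⁻¹ = -(r / (n*q)) := by
      field_simp
      nlinarith [hcast]
    have e4 : birk φ n η - birk φ q η = ((m:ℝ)/n - (q:ℝ)⁻¹) • S + (n:ℝ)⁻¹ • T := by
      rw [e1, e2, sub_smul]; abel
    rw [e4]
    have habs : |(m:ℝ)/n - (q:ℝ)⁻¹| ≤ (n:ℝ)⁻¹ := by
      rw [e3, abs_neg, abs_of_nonneg (by positivity)]
      have hrle : (r:ℝ) ≤ q := by exact_mod_cast hrq.le
      calc (r:ℝ)/(n*q) ≤ q/(n*q) := by gcongr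
        _ = (n:ℝ)⁻¹ := by field_simp
    calc ‖((m:ℝ)/n - (q:ℝ)⁻¹) • S + (n:ℝ)⁻¹ • T‖
        ≤ ‖((m:ℝ)/n - (q:ℝ)⁻¹) • S‖ + ‖(n:ℝ)⁻¹ • T‖ := norm_add_le _ _
      _ = |(m:ℝ)/n - (q:ℝ)⁻¹| * ‖S‖ + (n:ℝ)⁻¹ * ‖T‖ := by
          rw [norm_smul, norm_smul, Real.norm_eq_abs, Real.norm_eq_abs,
            abs_of_nonneg (by positivity : (0:ℝ) ≤ (n:ℝ)⁻¹)]
      _ ≤ (n:ℝ)⁻¹ * (q*C) + (n:ℝ)⁻¹ * (q*C) := by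
          apply add_le_add
          · exact mul_le_mul habs hSnorm (norm_nonneg _) (by positivity)
          · exact mul_le_mul_of_nonneg_left hTnorm (by positivity)
      _ = 2 * q * C / n := by field_simp; ring
  rw [HasRotVec, ← tendsto_sub_nhds_zero_iff]
  refine squeeze_zero_norm' ?_ (tendsto_const_div_atTop_nhds_zero_nat (2 * q * C))
  filter_upwards [eventually_ge_atTop 1] with n hn using key n hn

lemma exists_periodic_approx {s : ℕ} (hs : 3 ≤ s) (ξ : SymbSpace s) (nn : ℕ)
    (hnn : 1 ≤ nn) :
    ∃ η : SymbSpace s, shift^[nn+1] η = η ∧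
      ∀ m : ℤ, 0 ≤ m → m < (nn:ℤ) → η.1 m = ξ.1 m := by
  set u := ξ.1 with hu
  set Q : ℤ := (nn:ℤ) + 1 with hQ
  have hQ0 : 0 < Q := by omega
  have hcard : (({u ((nn:ℤ)-1), u 0} : Finset (Fin s))ᶜ).Nonempty := by
    rw [← Finset.card_pos, Finset.card_compl]
    have h2 : ({u ((nn:ℤ)-1), u 0} : Finset (Fin s)).card ≤ 2 :=
      (Finset.card_insert_le _ _).trans (by simp)
    have h3 : Fintype.card (Fin s) = s := Fintype.card_fin s
    omega
  obtain ⟨a, ha⟩ := hcard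
  rw [Finset.mem_compl, Finset.mem_insert, not_or, Finset.mem_singleton] at ha
  obtain ⟨ha1, ha2⟩ := ha
  have hmod0 : ∀ i : ℤ, 0 ≤ i % Q := fun i => Int.emod_nonneg i (by omega)
  have hmodQ : ∀ i : ℤ, i % Q < Q := fun i => Int.emod_lt_of_pos i hQ0
  have hsucc : ∀ i : ℤ, (i+1) % Q = if i % Q + 1 < Q then i % Q + 1 else 0 := by
    intro i
    have h1 : (i+1) % Q = (i % Q + 1) % Q := by
      have h11 : (1:ℤ) % Q = 1 := Int.emod_eq_of_lt (by norm_num) (by omega)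
      rw [Int.add_emod, h11]
    rw [h1]
    by_cases h : i % Q + 1 < Q
    · rw [if_pos h, Int.emod_eq_of_lt (by have := hmod0 i; omega) h]
    · rw [if_neg h]
      have hqeq : i % Q + 1 = Q := by have := hmodQ i; omega
      rw [hqeq, Int.emod_self]
  have hadm : ∀ i : ℤ, (if i % Q < (nn:ℤ) then u (i % Q) else a)
      ≠ (if (i+1) % Q < (nn:ℤ) then u ((i+1) % Q) else a) := by
    intro i
    have hr0 := hmod0 i
    have hrQ := hmodQ i
    have h2 := hsucc i
    by_cases hc : i % Q + 1 < Q
    · rw [if_pos hc] at h2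
      rw [h2]
      by_cases h1 : i % Q + 1 < (nn:ℤ)
      · rw [if_pos (by omega : i % Q < (nn:ℤ)), if_pos h1]
        exact ξ.2 (i % Q)
      · rw [if_pos (by omega : i % Q < (nn:ℤ)), if_neg (by omega)]
        have he : i % Q = (nn:ℤ) - 1 := by omega
        rw [he]
        exact fun h => ha1 h.symm
    · rw [if_neg hc] at h2
      rw [h2]
      rw [if_neg (by omega : ¬ i % Q < (nn:ℤ)), if_pos (by omega : (0:ℤ) < (nn:ℤ))]
      exact fun h => ha2 h
  refine ⟨⟨fun i => if i % Q < (nn:ℤ) then u (i % Q) else a, hadm⟩, ?_, ?_⟩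
  · apply Subtype.ext
    funext i
    refine (shift_iter_apply _ _ _).trans ?_
    show (if (i + ((nn+1:ℕ):ℤ)) % Q < (nn:ℤ) then u ((i + ((nn+1:ℕ):ℤ)) % Q) else a) = _
    have hiq : (i + ((nn+1:ℕ):ℤ)) % Q = i % Q := by
      have : ((nn+1:ℕ):ℤ) = Q := by push_cast; omega
      rw [this]
      have h5 := Int.add_mul_emod_self_left (a := i) (b := Q) (c := 1)
      simpa using h5
    rw [hiq]
  · intro m hm0 hmn
    show (if m % Q < (nn:ℤ) then u (m % Q) else a) = u m
    have : m % Q = m := Int.emod_eq_of_lt hm0 (by omega)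
    rw [this, if_pos hmn]


/-- For `s ≥ 3`, `N ≥ 1` and a continuous observable `φ : Σ_s → ℝ^N`,
the set `P_φ` of convex combinations of rotation vectors of periodic sequences is dense
in the general rotation set `G_φ`. -/
theorem periodic_convex_combinations_dense_in_general_rotation_set
    (s N : ℕ) (hs : 3 ≤ s) (hN : 1 ≤ N)
    (φ : SymbSpace s → EuclideanSpace ℝ (Fin N)) (hφ : Continuous φ) :
    ∀ ρ ∈ GenRot φ, ∀ ε : ℝ, 0 < ε →
      ∃ (k : ℕ), 0 < k ∧
        ∃ (ξ : Fin k → SymbSpace s) (p : Fin k → ℕ)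
          (ρs : Fin k → EuclideanSpace ℝ (Fin N)) (t : Fin k → ℝ),
          (∀ i, 0 < p i ∧ shift^[p i] (ξ i) = ξ i) ∧
          (∀ i, HasRotVec φ (ξ i) (ρs i)) ∧
          (∀ i, 0 ≤ t i) ∧ (∑ i, t i) = 1 ∧
          ‖(∑ i, t i • ρs i) - ρ‖ ≤ ε := by
  intro ρ hρ ε hε
  obtain ⟨ξ, n, hmono, hpos, hlim⟩ := hρ
  obtain ⟨x₀, -, hC0⟩ := isCompact_univ.exists_isMaxOn
    ⟨ξ, Set.mem_univ ξ⟩ hφ.norm.continuousOn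
  set C := ‖φ x₀‖ with hCdef
  have hC : ∀ x, ‖φ x‖ ≤ C := fun x => hC0 (Set.mem_univ x)
  have hCnn : (0:ℝ) ≤ C := le_trans (norm_nonneg _) (hC x₀)
  obtain ⟨M, hM⟩ := exists_window φ hφ (show (0:ℝ) < ε/3 by positivity)
  obtain ⟨K₁, hK₁⟩ := Metric.tendsto_atTop.mp hlim (ε/3) (by positivity)
  obtain ⟨K₂, hK₂⟩ := exists_nat_ge ((4*M+2)*C*3/ε)
  set k₀ := max K₁ K₂ with hk₀
  set nn := n k₀ with hnn
  have hnn1 : 1 ≤ nn := hpos k₀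
  have hnnK2 : K₂ ≤ nn := le_trans (le_max_right _ _) hmono.le_apply
  have hnnR : (0:ℝ) < nn := by exact_mod_cast hnn1
  have hquant : (4*M+2)*C/nn ≤ ε/3 := by
    rw [div_le_iff₀ hnnR]
    have h1 : ((4*M+2)*C*3/ε) ≤ (nn:ℝ) := le_trans hK₂ (by exact_mod_cast hnnK2)
    rw [div_le_iff₀ hε] at h1
    linarith
  have h3 : ‖birk φ nn ξ - ρ‖ < ε/3 := by
    have := hK₁ k₀ (le_max_left _ _)
    rwa [dist_eq_norm] at this
  obtain ⟨η, hper, hcoord⟩ := exists_periodic_approx hs ξ nn hnn1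
  have hrot := hasRotVec_of_periodic φ η (nn+1) (by omega) hper C hC
  set ρ₁ := birk φ (nn+1) η with hρ₁
  set f : ℕ → EuclideanSpace ℝ (Fin N) := fun i => φ (shift^[i] η) with hf
  set g : ℕ → EuclideanSpace ℝ (Fin N) := fun i => φ (shift^[i] ξ) with hg
  set S := ∑ i ∈ Finset.range nn, f i with hS
  have hSnorm : ‖S‖ ≤ nn * C := by
    calc ‖S‖ ≤ ∑ i ∈ Finset.range nn, ‖f i‖ := norm_sum_le _ _
      _ ≤ ∑ _i ∈ Finset.range nn, C := Finset.sum_le_sum fun i _ => hC _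
      _ = nn * C := by simp [mul_comm]
  -- (i) ‖ρ₁ - birk nn η‖ ≤ 2C/nn
  have hi : ‖ρ₁ - birk φ nn η‖ ≤ 2*C/nn := by
    have hqR : (0:ℝ) < (nn:ℝ)+1 := by positivity
    have e1 : ρ₁ = (((nn:ℝ)+1))⁻¹ • (S + f nn) := by
      rw [hρ₁]
      show ((nn+1:ℕ):ℝ)⁻¹ • ∑ i ∈ Finset.range (nn+1), f i = _
      rw [Finset.sum_range_succ]
      push_cast
      rfl
    have e2 : birk φ nn η = ((nn:ℝ))⁻¹ • S := rfl
    have e3 : ρ₁ - birk φ nn η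
        = (((nn:ℝ)+1))⁻¹ • f nn + ((((nn:ℝ)+1))⁻¹ - ((nn:ℝ))⁻¹) • S := by
      rw [e1, e2]; module
    rw [e3]
    have habs : |(((nn:ℝ)+1))⁻¹ - ((nn:ℝ))⁻¹| = ((nn:ℝ)*((nn:ℝ)+1))⁻¹ := by
      rw [abs_of_nonpos (by rw [sub_nonpos]; gcongr; linarith)]
      field_simp
      ring
    calc ‖(((nn:ℝ)+1))⁻¹ • f nn + ((((nn:ℝ)+1))⁻¹ - ((nn:ℝ))⁻¹) • S‖
        ≤ ‖(((nn:ℝ)+1))⁻¹ • f nn‖ + ‖((((nn:ℝ)+1))⁻¹ - ((nn:ℝ))⁻¹) • S‖ :=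
          norm_add_le _ _
      _ = (((nn:ℝ)+1))⁻¹ * ‖f nn‖ + ((nn:ℝ)*((nn:ℝ)+1))⁻¹ * ‖S‖ := by
          rw [norm_smul, norm_smul, Real.norm_eq_abs, Real.norm_eq_abs, habs,
            abs_of_nonneg (by positivity : (0:ℝ) ≤ (((nn:ℝ)+1))⁻¹)]
      _ ≤ (((nn:ℝ)+1))⁻¹ * C + ((nn:ℝ)*((nn:ℝ)+1))⁻¹ * (nn*C) := by
          gcongr
          exact hC _
      _ ≤ 2*C/nn := by
          rw [inv_mul_eq_div, inv_mul_eq_div]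
          rw [div_add_div _ _ (by positivity) (by positivity), div_le_div_iff₀
            (by positivity) (by positivity)]
          ring_nf
          nlinarith [hnnR, hCnn]
  -- (ii) ‖birk nn η - birk nn ξ‖ ≤ ε/3 + 4MC/nn
  have hii : ‖birk φ nn η - birk φ nn ξ‖ ≤ ε/3 + 4*M*C/nn := by
    have hterm : ∀ i ∈ Finset.range nn, ‖f i - g i‖ ≤
        ε/3 + (if M ≤ i ∧ i + M < nn then 0 else 2*C) := by
      intro i hi'
      rw [Finset.mem_range] at hi'
      by_cases hgood : M ≤ i ∧ i + M < nn
      · rw [if_pos hgood]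
        have hagree : ∀ j : ℤ, j.natAbs ≤ M → (shift^[i] η).1 j = (shift^[i] ξ).1 j := by
          intro j hj
          rw [shift_iter_apply, shift_iter_apply]
          exact hcoord (j + i) (by omega) (by omega)
        simpa using hM _ _ hagree
      · rw [if_neg hgood]
        have : ‖f i - g i‖ ≤ 2*C := by
          calc ‖f i - g i‖ ≤ ‖f i‖ + ‖g i‖ := norm_sub_le _ _
            _ ≤ C + C := add_le_add (hC _) (hC _)
            _ = 2*C := by ring
        linarith [div_pos hε (by norm_num : (0:ℝ) < 3)]
    have hsum2 : ∑ i ∈ Finset.range nn,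
        (if M ≤ i ∧ i + M < nn then (0:ℝ) else 2*C) ≤ 2*M * (2*C) := by
      rw [Finset.sum_ite, Finset.sum_const, Finset.sum_const]
      simp only [smul_zero, zero_add, nsmul_eq_mul]
      have hsub : (Finset.range nn).filter (fun i => ¬(M ≤ i ∧ i + M < nn))
          ⊆ Finset.range M ∪ Finset.Ico (nn - M) nn := by
        intro i hi'
        simp only [Finset.mem_filter, Finset.mem_range, Finset.mem_union,
          Finset.mem_Ico] at *
        omega
      have hcard : ((Finset.range nn).filter
          (fun i => ¬(M ≤ i ∧ i + M < nn))).card ≤ 2*M := by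
        refine (Finset.card_le_card hsub).trans ?_
        refine (Finset.card_union_le _ _).trans ?_
        simp only [Finset.card_range, Nat.card_Ico]
        omega
      have : (((Finset.range nn).filter
          (fun i => ¬(M ≤ i ∧ i + M < nn))).card : ℝ) ≤ 2*M := by exact_mod_cast hcard
      nlinarith
    have hdiff : birk φ nn η - birk φ nn ξ
        = (nn:ℝ)⁻¹ • ∑ i ∈ Finset.range nn, (f i - g i) := by
      show (nn:ℝ)⁻¹ • ∑ i ∈ Finset.range nn, f i
          - (nn:ℝ)⁻¹ • ∑ i ∈ Finset.range nn, g i = _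
      rw [Finset.sum_sub_distrib, smul_sub]
    rw [hdiff, norm_smul, Real.norm_eq_abs, abs_of_nonneg (by positivity)]
    have hbig : ‖∑ i ∈ Finset.range nn, (f i - g i)‖ ≤ nn * (ε/3) + 4*M*C := by
      calc ‖∑ i ∈ Finset.range nn, (f i - g i)‖
          ≤ ∑ i ∈ Finset.range nn, ‖f i - g i‖ := norm_sum_le _ _
        _ ≤ ∑ i ∈ Finset.range nn,
            (ε/3 + (if M ≤ i ∧ i + M < nn then 0 else 2*C)) :=
            Finset.sum_le_sum hterm
        _ = nn * (ε/3) + ∑ i ∈ Finset.range nn,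
            (if M ≤ i ∧ i + M < nn then (0:ℝ) else 2*C) := by
            rw [Finset.sum_add_distrib, Finset.sum_const, Finset.card_range,
              nsmul_eq_mul]
        _ ≤ nn * (ε/3) + 2*M*(2*C) := by linarith
        _ = nn * (ε/3) + 4*M*C := by ring
    calc (nn:ℝ)⁻¹ * ‖∑ i ∈ Finset.range nn, (f i - g i)‖
        ≤ (nn:ℝ)⁻¹ * (nn * (ε/3) + 4*M*C) := by
          exact mul_le_mul_of_nonneg_left hbig (by positivity)
      _ = ε/3 + 4*M*C/nn := by field_simp
  -- combine
  refine ⟨1, one_pos, fun _ => η, fun _ => nn+1, fun _ => ρ₁, fun _ => 1,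
    fun i => ⟨Nat.succ_pos nn, hper⟩, fun i => hrot, fun i => zero_le_one, by simp, ?_⟩
  have hsum1 : (∑ _i : Fin 1, (1:ℝ) • ρ₁) = ρ₁ := by simp
  rw [hsum1]
  calc ‖ρ₁ - ρ‖ ≤ ‖ρ₁ - birk φ nn η‖ + ‖birk φ nn η - birk φ nn ξ‖
        + ‖birk φ nn ξ - ρ‖ := by
        have := norm_add₃_le (a := ρ₁ - birk φ nn η) (b := birk φ nn η - birk φ nn ξ)
          (c := birk φ nn ξ - ρ)
        simpa using this
    _ ≤ 2*C/nn + (ε/3 + 4*M*C/nn) + ε/3 := by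
        exact add_le_add (add_le_add hi hii) h3.le
    _ ≤ ε := by
        have : 2*C/nn + 4*M*C/nn = (4*M+2)*C/nn := by field_simp; ring
        linarith
end

section
/- Let s ≥ 3 and N ≥ 1. Suppose φ : Σ_s → ℝ^N is bounded by some R > 0 and exponentially locally determined. Let ξ ∈ Σ_s be periodic of period n with period block Ξ = (ξ_0, ξ_1, …, ξ_{n−1}) (so ξ_{n−1} ≠ ξ_0). Then for every ε > 0 there exist positive integers p and ℓ, a symbol j ∈ {1,…,s} with j ∉ {ξ_{n−1}, ξ_0}, and a periodic sequence ξ̃ ∈ Σ_s of period pℓn + 1 whose period block consists of the block Ξ repeated pℓ times followed by the single symbol j, such that ‖ρ_φ(ξ) − ρ_φ(ξ̃)‖ < ε. -/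
open Filter Topology

/-- `φ` is exponentially locally determined: there are `C > 0` and `δ ∈ (0,1)` such that
whenever `ξ_j = ξ'_j` for all `-m ≤ j ≤ m'`, one has `‖φ(ξ) - φ(ξ')‖ ≤ C(δ^m + δ^{m'})`. -/
def ExpLocDet {s N : ℕ} (φ : SymbSpace s → EuclideanSpace ℝ (Fin N)) : Prop :=
  ∃ C : ℝ, 0 < C ∧ ∃ δ : ℝ, 0 < δ ∧ δ < 1 ∧
    ∀ (m m' : ℕ) (ξ ξ' : SymbSpace s),
      (∀ j : ℤ, -(m : ℤ) ≤ j → j ≤ (m' : ℤ) → ξ.1 j = ξ'.1 j) →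
      ‖φ ξ - φ ξ'‖ ≤ C * (δ ^ m + δ ^ m')

lemma shift_iterate {s : ℕ} (ξ : SymbSpace s) (k : ℕ) (i : ℤ) :
    (shift^[k] ξ).1 i = ξ.1 (i + k) := by
  induction k generalizing i with
  | zero => simp
  | succ k ih =>
    rw [Function.iterate_succ', Function.comp_apply]
    show (shift^[k] ξ).1 (i + 1) = _
    rw [ih]
    congr 1
    push_cast
    ring

lemma per_add {s : ℕ} (ξ : SymbSpace s) (n : ℕ) (hper : shift^[n] ξ = ξ) (k : ℤ) :
    ξ.1 (k + n) = ξ.1 k := by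
  conv_rhs => rw [← hper, shift_iterate]

lemma per_nat_mul {s : ℕ} (ξ : SymbSpace s) (n : ℕ) (hper : shift^[n] ξ = ξ)
    (t : ℕ) (k : ℤ) : ξ.1 (k + t * n) = ξ.1 k := by
  induction t with
  | zero => simp
  | succ t ih =>
    have : k + (t + 1 : ℕ) * n = (k + t * n) + n := by push_cast; ring
    rw [this, per_add ξ n hper, ih]

lemma per_mod {s : ℕ} (ξ : SymbSpace s) (n : ℕ) (hn : 0 < n) (hper : shift^[n] ξ = ξ)
    (k : ℤ) : ξ.1 k = ξ.1 (k % n) := by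
  have h1 : ∀ t : ℤ, ∀ x : ℤ, ξ.1 (x + t * n) = ξ.1 x := by
    intro t
    induction t using Int.induction_on with
    | zero => simp
    | succ t ih => intro x; have : x + (t+1:ℤ)*n = (x + t*n) + n := by ring
                   rw [this, per_add ξ n hper, ih]
    | pred t ih => intro x
                   have : x + (-t-1:ℤ)*n = (x + (-t)*n) - n := by ring
                   rw [this]
                   have h2 := per_add ξ n hper (x + (-t)*n - n)
                   rw [sub_add_cancel] at h2
                   rw [← h2]; exact ih x
  conv_lhs => rw [← Int.emod_add_mul_ediv k n]
  rw [mul_comm]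
  exact h1 _ _
lemma periodic_g {s N : ℕ} (φ : SymbSpace s → EuclideanSpace ℝ (Fin N))
    (ξ : SymbSpace s) (m : ℕ) (hper : shift^[m] ξ = ξ) (i : ℕ) :
    φ (shift^[m + i] ξ) = φ (shift^[i] ξ) := by
  rw [add_comm, Function.iterate_add_apply, hper]

lemma sum_periodic {s N : ℕ} (φ : SymbSpace s → EuclideanSpace ℝ (Fin N))
    (ξ : SymbSpace s) (m : ℕ) (hper : shift^[m] ξ = ξ) (q r : ℕ) :
    ∑ i ∈ Finset.range (q * m + r), φ (shift^[i] ξ)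
      = q • (∑ i ∈ Finset.range m, φ (shift^[i] ξ))
        + ∑ i ∈ Finset.range r, φ (shift^[i] ξ) := by
  induction q with
  | zero => simp
  | succ q ih =>
    have h1 : (q + 1) * m + r = m + (q * m + r) := by ring
    rw [h1, Finset.sum_range_add]
    have h2 : ∀ i ∈ Finset.range (q * m + r),
        φ (shift^[m + i] ξ) = φ (shift^[i] ξ) :=
      fun i _ => periodic_g φ ξ m hper i
    rw [Finset.sum_congr rfl h2, ih, succ_nsmul]
    abel

lemma norm_birk_sum_le {s N : ℕ} (φ : SymbSpace s → EuclideanSpace ℝ (Fin N))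
    (R : ℝ) (hbdd : ∀ ξ, ‖φ ξ‖ ≤ R) (ξ : SymbSpace s) (m : ℕ) :
    ‖∑ i ∈ Finset.range m, φ (shift^[i] ξ)‖ ≤ m * R := by
  calc ‖∑ i ∈ Finset.range m, φ (shift^[i] ξ)‖
      ≤ ∑ i ∈ Finset.range m, ‖φ (shift^[i] ξ)‖ := norm_sum_le _ _
    _ ≤ ∑ _i ∈ Finset.range m, R := Finset.sum_le_sum fun i _ => hbdd _
    _ = m * R := by simp [mul_comm]

lemma hasRotVec_periodic {s N : ℕ} (φ : SymbSpace s → EuclideanSpace ℝ (Fin N))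
    (R : ℝ) (hR : 0 < R) (hbdd : ∀ ξ, ‖φ ξ‖ ≤ R)
    (ξ : SymbSpace s) (m : ℕ) (hm : 0 < m) (hper : shift^[m] ξ = ξ) :
    HasRotVec φ ξ (birk φ m ξ) := by
  rw [HasRotVec, tendsto_iff_norm_sub_tendsto_zero]
  have hm' : (m : ℝ) ≠ 0 := Nat.cast_ne_zero.mpr hm.ne'
  apply squeeze_zero' (g := fun k : ℕ => 2 * m * R / k)
  · filter_upwards with k using norm_nonneg _
  · filter_upwards [eventually_ge_atTop 1] with k hk
    have hk' : (0:ℝ) < k := by exact_mod_cast hk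
    set S := ∑ i ∈ Finset.range m, φ (shift^[i] ξ) with hS
    set q := k / m
    set r := k % m
    have hkqr : m * q + r = k := Nat.div_add_mod k m
    have hrm : r < m := Nat.mod_lt _ hm
    have hsplit : ∑ i ∈ Finset.range k, φ (shift^[i] ξ)
        = q • S + ∑ i ∈ Finset.range r, φ (shift^[i] ξ) := by
      rw [show k = q * m + r from by rw [mul_comm q m]; omega]
      exact sum_periodic φ ξ m hper q r
    set T := ∑ i ∈ Finset.range r, φ (shift^[i] ξ) with hT
    have hbk : birk φ k ξ - birk φ m ξ
        = ((q : ℝ) * (k:ℝ)⁻¹ - (m:ℝ)⁻¹) • S + (k:ℝ)⁻¹ • T := by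
      rw [birk, birk, hsplit, ← Nat.cast_smul_eq_nsmul ℝ q S]
      module
    have hcoef : (q : ℝ) * (k:ℝ)⁻¹ - (m:ℝ)⁻¹ = -((r:ℝ) / (k * m)) := by
      have hkey : (m:ℝ) * q + r = k := by exact_mod_cast hkqr
      field_simp
      nlinarith [hkey]
    have hSn : ‖S‖ ≤ m * R := norm_birk_sum_le φ R hbdd ξ m
    have hTn : ‖T‖ ≤ r * R := norm_birk_sum_le φ R hbdd ξ r
    calc ‖birk φ k ξ - birk φ m ξ‖
        ≤ ‖((q : ℝ) * (k:ℝ)⁻¹ - (m:ℝ)⁻¹) • S‖ + ‖(k:ℝ)⁻¹ • T‖ := by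
          rw [hbk]; exact norm_add_le _ _
      _ = ((r:ℝ) / (k * m)) * ‖S‖ + (k:ℝ)⁻¹ * ‖T‖ := by
          rw [norm_smul, norm_smul, hcoef, norm_neg, Real.norm_eq_abs,
            Real.norm_eq_abs, abs_of_nonneg, abs_of_nonneg]
          · positivity
          · positivity
      _ ≤ ((r:ℝ) / (k * m)) * (m * R) + (k:ℝ)⁻¹ * (r * R) := by
          have h1 : (0:ℝ) ≤ (r:ℝ) / (k * m) := by positivity
          have h2 : (0:ℝ) ≤ (k:ℝ)⁻¹ := by positivity
          exact add_le_add (mul_le_mul_of_nonneg_left hSn h1)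
            (mul_le_mul_of_nonneg_left hTn h2)
      _ ≤ 2 * m * R / k := by
          have hrm' : (r:ℝ) ≤ m := by exact_mod_cast hrm.le
          have hm0 : (0:ℝ) < m := by exact_mod_cast hm
          have e1 : (r:ℝ) / ((k:ℝ) * m) * ((m:ℝ) * R) = (r:ℝ) * R / k := by
            field_simp
          have e2 : ((k:ℝ))⁻¹ * ((r:ℝ) * R) = (r:ℝ) * R / k := by ring
          rw [e1, e2, ← add_div]
          gcongr ?_ / (k:ℝ)
          nlinarith
  · exact tendsto_const_div_atTop_nhds_zero_nat _
/-- The bi-infinite sequence of period `K+1` whose block is `x_0,…,x_{K-1}, j`. -/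
def specialSeq {s : ℕ} (x : ℤ → Fin s) (j : Fin s) (K : ℕ) : ℤ → Fin s :=
  fun k => if k % ((K : ℤ) + 1) = (K : ℤ) then j else x (k % ((K : ℤ) + 1))

lemma specialSeq_eq {s : ℕ} (x : ℤ → Fin s) (j : Fin s) (K : ℕ) (k : ℤ)
    (h0 : 0 ≤ k) (hk : k < (K : ℤ)) : specialSeq x j K k = x k := by
  unfold specialSeq
  rw [Int.emod_eq_of_lt h0 (by omega), if_neg (by omega)]

lemma specialSeq_top {s : ℕ} (x : ℤ → Fin s) (j : Fin s) (K : ℕ) :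
    specialSeq x j K (K : ℤ) = j := by
  unfold specialSeq
  rw [Int.emod_eq_of_lt (by positivity) (by omega), if_pos rfl]

lemma specialSeq_per {s : ℕ} (x : ℤ → Fin s) (j : Fin s) (K : ℕ) (k : ℤ) :
    specialSeq x j K (k + ((K : ℤ) + 1)) = specialSeq x j K k := by
  have h : (k + ((K : ℤ) + 1)) % ((K : ℤ) + 1) = k % ((K : ℤ) + 1) := by
    rw [show k + ((K : ℤ) + 1) = k + ((K : ℤ) + 1) * 1 from by ring,
      Int.add_mul_emod_self_left]
  unfold specialSeq
  rw [h]

lemma specialSeq_adm {s n p : ℕ} (ξ : SymbSpace s) (hn : 0 < n)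
    (hper : shift^[n] ξ = ξ) (hp : 0 < p) (j : Fin s)
    (hj1 : j ≠ ξ.1 ((n : ℤ) - 1)) (hj2 : j ≠ ξ.1 0) (i : ℤ) :
    specialSeq ξ.1 j (p * n) i ≠ specialSeq ξ.1 j (p * n) (i + 1) := by
  unfold specialSeq
  set K := p * n with hK
  have hK0 : 0 < K := Nat.mul_pos hp hn
  set M : ℤ := (K : ℤ) + 1 with hMdef
  have hM0 : (0 : ℤ) < M := by omega
  have h0 : 0 ≤ i % M := Int.emod_nonneg i (by omega)
  have h1 : i % M < M := Int.emod_lt_of_pos i hM0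
  have hstep : (i + 1) % M = (i % M + 1) % M := by
    conv_lhs => rw [Int.add_emod]
    rw [Int.emod_eq_of_lt (a := (1:ℤ)) (by norm_num) (by omega)]
  by_cases hr : i % M = (K : ℤ)
  · rw [if_pos hr]
    have h2 : (i + 1) % M = 0 := by
      rw [hstep, hr, ← hMdef, Int.emod_self]
    rw [h2, if_neg (by omega)]
    exact hj2
  · by_cases hr1 : i % M + 1 = (K : ℤ)
    · have h2 : (i + 1) % M = (K : ℤ) := by
        rw [hstep, hr1]
        exact Int.emod_eq_of_lt (by omega) (by omega)
      rw [if_neg hr, h2, if_pos rfl]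
      have hiK : i % M = (p : ℤ) * n - 1 := by
        rw [hK] at hr1
        push_cast at hr1
        linarith
      have hval : ξ.1 (i % M) = ξ.1 ((n : ℤ) - 1) := by
        rw [hiK, show (p : ℤ) * n - 1 = ((n : ℤ) - 1) + ((p - 1 : ℕ) : ℤ) * n from by
          push_cast [Nat.cast_sub hp]
          ring]
        exact per_nat_mul ξ n hper (p - 1) _
      rw [hval]
      exact fun h => hj1 h.symm
    · have h2 : (i + 1) % M = i % M + 1 := by
        rw [hstep]
        exact Int.emod_eq_of_lt (by omega) (by omega)
      rw [if_neg hr, h2, if_neg hr1]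
      exact ξ.2 (i % M)
/-- a rotation vector of a periodic sequence `ξ` of period `n` with period
block `Ξ = (ξ_0,…,ξ_{n-1})` can be approximated within any `ε > 0` by the rotation
vector of a periodic sequence `ξ̃` of period `pℓn + 1` whose period block is `Ξ`
repeated `pℓ` times followed by one extra symbol `j ∉ {ξ_{n-1}, ξ_0}`. -/
theorem periodic_approx_by_special_periodic (s N : ℕ) (hs : 3 ≤ s) (hN : 1 ≤ N)
    (φ : SymbSpace s → EuclideanSpace ℝ (Fin N))
    (R : ℝ) (hR : 0 < R) (hbdd : ∀ ξ, ‖φ ξ‖ ≤ R) (hloc : ExpLocDet φ)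
    (ξ : SymbSpace s) (n : ℕ) (hn : 0 < n) (hper : shift^[n] ξ = ξ)
    (ε : ℝ) (hε : 0 < ε) :
    ∃ (p ℓ : ℕ), 0 < p ∧ 0 < ℓ ∧
      ∃ j : Fin s, j ≠ ξ.1 ((n : ℤ) - 1) ∧ j ≠ ξ.1 0 ∧
        ∃ ξt : SymbSpace s,
          shift^[p * ℓ * n + 1] ξt = ξt ∧
          (∀ i : ℕ, i < p * ℓ * n → ξt.1 (i : ℤ) = ξ.1 ((i % n : ℕ) : ℤ)) ∧
          ξt.1 ((p * ℓ * n : ℕ) : ℤ) = j ∧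
          ∃ ρ ρt : EuclideanSpace ℝ (Fin N),
            HasRotVec φ ξ ρ ∧ HasRotVec φ ξt ρt ∧ ‖ρ - ρt‖ < ε := by
  obtain ⟨C, hC, δ, hδ0, hδ1, hloc'⟩ := hloc
  have h1δ : (0 : ℝ) < 1 - δ := by linarith
  -- choose the symbol j
  have hj : ∃ j : Fin s, j ≠ ξ.1 ((n : ℤ) - 1) ∧ j ≠ ξ.1 0 := by
    by_contra h
    push_neg at h
    have hsub : (Finset.univ : Finset (Fin s)) ⊆ {ξ.1 ((n : ℤ) - 1), ξ.1 0} := by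
      intro a _
      by_cases ha : a = ξ.1 ((n : ℤ) - 1)
      · simp [ha]
      · simp [h a ha]
    have h1 := Finset.card_le_card hsub
    have h2 : ({ξ.1 ((n : ℤ) - 1), ξ.1 0} : Finset (Fin s)).card ≤ 2 := by
      apply le_trans (Finset.card_insert_le _ _)
      simp
    rw [Finset.card_univ, Fintype.card_fin] at h1
    omega
  obtain ⟨j, hj1, hj2⟩ := hj
  -- choose p
  set B := 2 * R + 2 * C / (1 - δ) with hB
  have hBpos : 0 < B := by positivity
  obtain ⟨p, hp⟩ := exists_nat_gt (B / ε)
  have hp0 : 0 < p := by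
    have : (0 : ℝ) < p := lt_trans (div_pos hBpos hε) hp
    exact_mod_cast this
  set K := p * n with hK
  have hK0 : 0 < K := Nat.mul_pos hp0 hn
  set M := K + 1 with hM
  -- the special sequence
  set ξt : SymbSpace s :=
    ⟨specialSeq ξ.1 j K, specialSeq_adm ξ hn hper hp0 j hj1 hj2⟩ with hξt
  have hpert : shift^[M] ξt = ξt := by
    apply Subtype.ext
    funext i
    rw [shift_iterate]
    show specialSeq ξ.1 j K (i + (M : ℤ)) = specialSeq ξ.1 j K i
    rw [show ((M : ℕ) : ℤ) = (K : ℤ) + 1 from by push_cast [hM]; ring]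
    exact specialSeq_per ξ.1 j K i
  -- rotation vectors
  set ρ := birk φ n ξ with hρdef
  set ρt := birk φ M ξt with hρtdef
  have hρ : HasRotVec φ ξ ρ := hasRotVec_periodic φ R hR hbdd ξ n hn hper
  have hρt : HasRotVec φ ξt ρt := hasRotVec_periodic φ R hR hbdd ξt M (by omega) hpert
  -- basic norms
  have hnR : (0 : ℝ) < n := by exact_mod_cast hn
  have hρR : ‖ρ‖ ≤ R := by
    rw [hρdef, birk, norm_smul, Real.norm_eq_abs, abs_of_nonneg (by positivity)]
    calc ((n : ℝ))⁻¹ * ‖∑ i ∈ Finset.range n, φ (shift^[i] ξ)‖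
        ≤ ((n : ℝ))⁻¹ * ((n : ℝ) * R) :=
          mul_le_mul_of_nonneg_left (norm_birk_sum_le φ R hbdd ξ n) (by positivity)
      _ = R := by field_simp
  -- sum over one block of ξ repeated p times
  have hKsum : ∑ i ∈ Finset.range K, φ (shift^[i] ξ)
      = ((K : ℕ) : ℝ) • ρ := by
    have h := sum_periodic φ ξ n hper p 0
    simp only [add_zero, Finset.range_zero, Finset.sum_empty] at h
    rw [hK, h, ← Nat.cast_smul_eq_nsmul ℝ p, hρdef, birk, smul_smul]
    congr 1
    field_simp
    rw [Nat.cast_mul]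
  -- the correction term D
  set D := ∑ i ∈ Finset.range K, (φ (shift^[i] ξt) - φ (shift^[i] ξ)) with hD
  have hGsum : ∑ i ∈ Finset.range K, δ ^ i ≤ 1 / (1 - δ) := by
    rw [geom_sum_eq hδ1.ne K,
      show (δ ^ K - 1) / (δ - 1) = (1 - δ ^ K) / (1 - δ) from by
        rw [← neg_div_neg_eq, neg_sub, neg_sub]]
    gcongr
    linarith [pow_nonneg hδ0.le K]
  have hDnorm : ‖D‖ ≤ 2 * C / (1 - δ) := by
    calc ‖D‖ ≤ ∑ i ∈ Finset.range K, ‖φ (shift^[i] ξt) - φ (shift^[i] ξ)‖ :=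
          norm_sum_le _ _
      _ ≤ ∑ i ∈ Finset.range K, C * (δ ^ i + δ ^ (K - 1 - i)) := by
          apply Finset.sum_le_sum
          intro i hi
          have hiK : i < K := Finset.mem_range.mp hi
          apply hloc' i (K - 1 - i) _ _
          intro jj hjj1 hjj2
          rw [shift_iterate, shift_iterate]
          show specialSeq ξ.1 j K (jj + (i : ℤ)) = ξ.1 (jj + (i : ℤ))
          exact specialSeq_eq ξ.1 j K _ (by omega) (by omega)
      _ = C * (∑ i ∈ Finset.range K, δ ^ i
            + ∑ i ∈ Finset.range K, δ ^ (K - 1 - i)) := by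
          rw [← Finset.mul_sum, Finset.sum_add_distrib]
      _ = C * (∑ i ∈ Finset.range K, δ ^ i + ∑ i ∈ Finset.range K, δ ^ i) := by
          rw [Finset.sum_range_reflect (fun i => δ ^ i) K]
      _ ≤ C * (1 / (1 - δ) + 1 / (1 - δ)) :=
          mul_le_mul_of_nonneg_left (add_le_add hGsum hGsum) hC.le
      _ = 2 * C / (1 - δ) := by ring
  -- the exact relation between ρ and ρt
  have hMne : ((M : ℕ) : ℝ) ≠ 0 := by positivity
  have hsum_t : ∑ i ∈ Finset.range M, φ (shift^[i] ξt)
      = ((K : ℕ) : ℝ) • ρ + (D + φ (shift^[K] ξt)) := by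
    rw [hM, Finset.sum_range_succ]
    have hDsplit : ∑ i ∈ Finset.range K, φ (shift^[i] ξt)
        = ((K : ℕ) : ℝ) • ρ + D := by
      rw [hD, Finset.sum_sub_distrib, hKsum]
      abel
    rw [hDsplit]
    abel
  have hMρt : ((M : ℕ) : ℝ) • ρt = ((K : ℕ) : ℝ) • ρ + (D + φ (shift^[K] ξt)) := by
    rw [hρtdef, birk, smul_inv_smul₀ hMne, hsum_t]
  have key : ρ - ρt = ((M : ℕ) : ℝ)⁻¹ • (ρ - (D + φ (shift^[K] ξt))) := by
    rw [eq_inv_smul_iff₀ hMne, smul_sub, hMρt,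
      show ((M : ℕ) : ℝ) = ((K : ℕ) : ℝ) + 1 from by push_cast [hM]; ring,
      add_smul, one_smul]
    abel
  -- final estimate
  have hbound : ‖ρ - (D + φ (shift^[K] ξt))‖ ≤ B := by
    calc ‖ρ - (D + φ (shift^[K] ξt))‖
        ≤ ‖ρ‖ + ‖D + φ (shift^[K] ξt)‖ := norm_sub_le _ _
      _ ≤ R + (2 * C / (1 - δ) + R) :=
          add_le_add hρR (le_trans (norm_add_le _ _)
            (add_le_add hDnorm (hbdd _)))
      _ = B := by rw [hB]; ring
  have hMR : (0 : ℝ) < ((M : ℕ) : ℝ) := by positivity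
  have hMB : B / ε < ((M : ℕ) : ℝ) := by
    have h1 : (p : ℝ) ≤ ((M : ℕ) : ℝ) := by
      have : p ≤ M := by
        calc p = p * 1 := (mul_one p).symm
          _ ≤ p * n := Nat.mul_le_mul_left p hn
          _ ≤ M := by omega
      exact_mod_cast this
    linarith
  have hfinal : ‖ρ - ρt‖ < ε := by
    rw [key, norm_smul, Real.norm_eq_abs, abs_of_nonneg (by positivity)]
    calc ((M : ℕ) : ℝ)⁻¹ * ‖ρ - (D + φ (shift^[K] ξt))‖
        ≤ ((M : ℕ) : ℝ)⁻¹ * B :=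
          mul_le_mul_of_nonneg_left hbound (by positivity)
      _ < ε := by
          rw [inv_mul_eq_div, div_lt_iff₀ hMR]
          have := (div_lt_iff₀ hε).mp hMB
          linarith
  -- assemble
  have hK1 : p * 1 * n = K := by rw [hK]; ring
  refine ⟨p, 1, hp0, Nat.one_pos, j, hj1, hj2, ξt, ?_, ?_, ?_, ρ, ρt, hρ, hρt, hfinal⟩
  · rw [hK1]
    exact hpert
  · intro i hi
    rw [hK1] at hi
    show specialSeq ξ.1 j K (i : ℤ) = ξ.1 ((i % n : ℕ) : ℤ)
    rw [specialSeq_eq ξ.1 j K _ (by positivity) (by exact_mod_cast hi)]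
    rw [per_mod ξ n hn hper (i : ℤ)]
    congr 1
  · rw [hK1]
    exact specialSeq_top ξ.1 j K
end
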